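/- arXiv:1603.04275 — 8 statements merged into one kernel-verified Lean document; each statement's English description precedes it below -/
import Mathlib

section
/- If S : X → Y is a linear map between Banach spaces and T : Y → Z is a bounded linear map into a Banach space Z, then the separating space of the composite satisfies 𝔖(T ∘ S) = closure of T[𝔖(S)]. -/
def separatingSpace {X Y : Type*} [NormedAddCommGroup X] [NormedAddCommGroup Y]
    (S : X → Y) : Set Y :=
  {y | ∃ x : ℕ → X, Filter.Tendsto x Filter.atTop (nhds 0) ∧
    Filter.Tendsto (fun n => S (x n)) Filter.atTop (nhds y)}

open Filter Topology

section Aux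

variable {X Y : Type*} [NormedAddCommGroup X] [NormedAddCommGroup Y]

lemma mem_separatingSpace_iff (U : X → Y) (z : Y) :
    z ∈ separatingSpace U ↔ ∀ ε > 0, ∃ x : X, ‖x‖ < ε ∧ ‖U x - z‖ < ε := by
  constructor
  · rintro ⟨x, hx, hUx⟩ ε hε
    obtain ⟨N1, hN1⟩ := Metric.tendsto_atTop.mp hx ε hε
    obtain ⟨N2, hN2⟩ := Metric.tendsto_atTop.mp hUx ε hε
    refine ⟨x (max N1 N2), ?_, ?_⟩
    · simpa [dist_eq_norm] using hN1 _ (le_max_left _ _)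
    · simpa [dist_eq_norm] using hN2 _ (le_max_right _ _)
  · intro h
    choose x hx hUx using fun n : ℕ => h (1 / (n + 1)) (by positivity)
    refine ⟨x, ?_, ?_⟩
    · rw [tendsto_zero_iff_norm_tendsto_zero]
      exact squeeze_zero (fun n => norm_nonneg _) (fun n => (hx n).le)
        tendsto_one_div_add_atTop_nhds_zero_nat
    · rw [tendsto_iff_norm_sub_tendsto_zero]
      exact squeeze_zero (fun n => norm_nonneg _) (fun n => (hUx n).le)
        tendsto_one_div_add_atTop_nhds_zero_nat

lemma isClosed_separatingSpace (U : X → Y) : IsClosed (separatingSpace U) := by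
  refine isClosed_of_closure_subset fun z hz => ?_
  rw [mem_separatingSpace_iff]
  intro ε hε
  obtain ⟨z', hz', hd⟩ := Metric.mem_closure_iff.mp hz (ε / 2) (by positivity)
  obtain ⟨x, hx, hUx⟩ := (mem_separatingSpace_iff U z').mp hz' (ε / 2) (by positivity)
  refine ⟨x, by linarith, ?_⟩
  have h3 : U x - z = (U x - z') + (z' - z) := by abel
  have h4 : ‖z' - z‖ < ε / 2 := by
    rw [← dist_eq_norm, dist_comm]; exact hd
  calc ‖U x - z‖ ≤ ‖U x - z'‖ + ‖z' - z‖ := by rw [h3]; exact norm_add_le _ _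
    _ < ε := by linarith

end Aux

section Mod

variable {X Y : Type*} [NormedAddCommGroup X] [NormedSpace ℝ X]
  [NormedAddCommGroup Y] [NormedSpace ℝ Y]

/-- The separating space of a linear map as a submodule. -/
def sepSubmodule (S : X →ₗ[ℝ] Y) : Submodule ℝ Y where
  carrier := separatingSpace S
  zero_mem' := ⟨fun _ => 0, tendsto_const_nhds, by simpa using tendsto_const_nhds⟩
  add_mem' := by
    rintro a b ⟨x, hx, hSx⟩ ⟨x', hx', hSx'⟩
    exact ⟨fun n => x n + x' n, by simpa using hx.add hx',
      by simpa [map_add] using hSx.add hSx'⟩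
  smul_mem' := by
    rintro c a ⟨x, hx, hSx⟩
    refine ⟨fun n => c • x n, ?_, ?_⟩
    · simpa using hx.const_smul c
    · simpa [map_smul] using hSx.const_smul c

end Mod

/-- For linear S and bounded linear T, 𝔖(T ∘ S) = closure (T '' 𝔖(S)). -/
theorem separatingSpace_comp
    {X Y Z : Type*} [NormedAddCommGroup X] [NormedSpace ℝ X] [CompleteSpace X]
    [NormedAddCommGroup Y] [NormedSpace ℝ Y] [CompleteSpace Y]
    [NormedAddCommGroup Z] [NormedSpace ℝ Z] [CompleteSpace Z]
    (S : X →ₗ[ℝ] Y) (T : Y →L[ℝ] Z) :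
    separatingSpace (fun x => T (S x)) = closure (T '' separatingSpace S) := by
  set M : Submodule ℝ Y := sepSubmodule S with hM
  have hMset : (M : Set Y) = separatingSpace S := rfl
  haveI : IsClosed (M : Set Y) := by rw [hMset]; exact isClosed_separatingSpace _
  -- the induced map into the quotient
  set G : X →ₗ[ℝ] Y ⧸ M := M.mkQ.comp S with hG
  have hGcont : Continuous G := by
    apply LinearMap.continuous_of_seq_closed_graph
    intro u x y hu hGu
    -- reduce to the case x = 0
    have hv : Tendsto (fun n => u n - x) atTop (𝓝 0) := by
      simpa using hu.sub_const x
    obtain ⟨y₀, hy₀⟩ := M.mkQ_surjective (y - G x)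
    have hGv : Tendsto (fun n => Submodule.Quotient.mk (S (u n - x) - y₀) : ℕ → Y ⧸ M)
        atTop (𝓝 0) := by
      have : Tendsto (fun n => G (u n) - G x) atTop (𝓝 (y - G x)) :=
        (hGu.sub tendsto_const_nhds)
      have h2 : ∀ n, (Submodule.Quotient.mk (S (u n - x) - y₀) : Y ⧸ M)
          = G (u n) - G x - (y - G x) := by
        intro n
        have : (Submodule.Quotient.mk (S (u n - x)) : Y ⧸ M) = G (u n) - G x := by
          simp [hG, map_sub]
        rw [show (Submodule.Quotient.mk (S (u n - x) - y₀) : Y ⧸ M)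
            = Submodule.Quotient.mk (S (u n - x)) - Submodule.Quotient.mk y₀ by
          simp [Submodule.Quotient.mk_sub], this,
          show (Submodule.Quotient.mk y₀ : Y ⧸ M) = y - G x from hy₀]
      simp only [h2]
      simpa using this.sub_const (y - G x)
    -- extract good representatives
    have hnorm : Tendsto (fun n => ‖(Submodule.Quotient.mk (S (u n - x) - y₀) : Y ⧸ M)‖)
        atTop (𝓝 0) := by
      simpa [tendsto_zero_iff_norm_tendsto_zero] using hGv
    have key : y₀ ∈ separatingSpace (S : X → Y) := by
      rw [mem_separatingSpace_iff]
      intro ε hε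
      -- find n with ‖u n - x‖ < ε/2 and quotient norm < ε/4
      obtain ⟨N1, hN1⟩ := Metric.tendsto_atTop.mp hv (ε / 2) (by positivity)
      obtain ⟨N2, hN2⟩ := Metric.tendsto_atTop.mp hnorm (ε / 4) (by positivity)
      set n := max N1 N2
      have h1 : ‖u n - x‖ < ε / 2 := by
        simpa [dist_eq_norm] using hN1 n (le_max_left _ _)
      have h2 : ‖(Submodule.Quotient.mk (S (u n - x) - y₀) : Y ⧸ M)‖ < ε / 4 := by
        simpa [dist_eq_norm] using hN2 n (le_max_right _ _)
      -- choose m ∈ M close to S (u n - x) - y₀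
      obtain ⟨w, hw1, hw2⟩ := Submodule.Quotient.norm_mk_lt
        (Submodule.Quotient.mk (S (u n - x) - y₀) : Y ⧸ M) (show (0:ℝ) < ε / 4 by positivity)
      -- w ≡ S (u n - x) - y₀ mod M, so m := S (u n - x) - y₀ - w ∈ M
      have hmem : S (u n - x) - y₀ - w ∈ M := by
        simpa using (Submodule.Quotient.eq M).mp hw1.symm
      have hwn : ‖w‖ < ε / 2 := by linarith
      -- m ∈ separatingSpace S: get x' with small norm and S x' close to m
      obtain ⟨x', hx', hSx'⟩ := (mem_separatingSpace_iff (S : X → Y) _).mp hmem (ε / 2)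
        (by positivity)
      refine ⟨u n - x - x', ?_, ?_⟩
      · calc ‖u n - x - x'‖ ≤ ‖u n - x‖ + ‖x'‖ := norm_sub_le _ _
          _ < ε := by linarith
      · have : S (u n - x - x') - y₀
            = -(S x' - (S (u n - x) - y₀ - w)) + w := by
          simp only [map_sub]; abel
        rw [this]
        calc ‖-(S x' - (S (u n - x) - y₀ - w)) + w‖
            ≤ ‖-(S x' - (S (u n - x) - y₀ - w))‖ + ‖w‖ := norm_add_le _ _
          _ = ‖S x' - (S (u n - x) - y₀ - w)‖ + ‖w‖ := by rw [norm_neg]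
          _ < ε := by linarith
    have : Submodule.Quotient.mk y₀ = (0 : Y ⧸ M) :=
      (Submodule.Quotient.mk_eq_zero M).mpr key
    have hy : y - G x = 0 := by rw [← hy₀]; exact this
    have := sub_eq_zero.mp hy
    exact this
  apply Set.Subset.antisymm
  · -- hard inclusion
    rintro z ⟨x, hx, hTSx⟩
    have hq : Tendsto (fun n => ‖(Submodule.Quotient.mk (S (x n)) : Y ⧸ M)‖) atTop (𝓝 0) := by
      have : Tendsto (fun n => G (x n)) atTop (𝓝 (G 0)) :=
        (hGcont.tendsto 0).comp hx
      rw [map_zero] at this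
      simpa [tendsto_zero_iff_norm_tendsto_zero, hG] using this
    -- choose representatives
    have hchoice : ∀ n : ℕ, ∃ m ∈ separatingSpace (S : X → Y),
        ‖S (x n) - m‖ < ‖(Submodule.Quotient.mk (S (x n)) : Y ⧸ M)‖ + 1 / (n + 1) := by
      intro n
      obtain ⟨w, hw1, hw2⟩ := Submodule.Quotient.norm_mk_lt
        (Submodule.Quotient.mk (S (x n)) : Y ⧸ M) (show (0:ℝ) < 1 / (n + 1) by positivity)
      have hmem : S (x n) - w ∈ M := by
        simpa using (Submodule.Quotient.eq M).mp hw1.symm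
      exact ⟨S (x n) - w, hmem, by simpa using hw2⟩
    choose m hm hmn using hchoice
    have hdiff : Tendsto (fun n => S (x n) - m n) atTop (𝓝 0) := by
      rw [tendsto_zero_iff_norm_tendsto_zero]
      refine squeeze_zero (fun n => norm_nonneg _) (fun n => (hmn n).le) ?_
      simpa using hq.add tendsto_one_div_add_atTop_nhds_zero_nat
    have hTm : Tendsto (fun n => T (m n)) atTop (𝓝 z) := by
      have h1 : Tendsto (fun n => T (S (x n) - m n)) atTop (𝓝 0) := by
        have := (T.continuous.tendsto 0).comp hdiff
        simpa [Function.comp_def] using this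
      have h2 : ∀ n, T (m n) = T (S (x n)) - T (S (x n) - m n) := by
        intro n; simp [map_sub]
      simp only [h2]
      simpa using hTSx.sub h1
    refine mem_closure_of_tendsto hTm ?_
    exact Eventually.of_forall fun n => ⟨m n, hm n, rfl⟩
  · -- easy inclusion
    refine closure_minimal ?_ (isClosed_separatingSpace _)
    rintro z ⟨y, ⟨x, hx, hSx⟩, rfl⟩
    exact ⟨x, hx, (T.continuous.tendsto y).comp hSx⟩
end

section
/- If S : X → Y is a linear map between Banach spaces, T : Y → Z is a bounded linear map, and T vanishes on the separating space 𝔖(S), then the composite T ∘ S is bounded. -/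
/-- If a bounded linear map T vanishes on 𝔖(S), then T ∘ S is continuous. -/
theorem continuous_comp_of_separatingSpace_subset_ker
    {X Y Z : Type*} [NormedAddCommGroup X] [NormedSpace ℝ X] [CompleteSpace X]
    [NormedAddCommGroup Y] [NormedSpace ℝ Y] [CompleteSpace Y]
    [NormedAddCommGroup Z] [NormedSpace ℝ Z] [CompleteSpace Z]
    (S : X →ₗ[ℝ] Y) (T : Y →L[ℝ] Z)
    (h : ∀ y ∈ separatingSpace S, T y = 0) :
    Continuous fun x => T (S x) := by
  -- G : closure of the graph of S in X × Y
  set G : Submodule ℝ (X × Y) := (LinearMap.graph S).topologicalClosure with hG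
  have hGclosed : IsClosed (G : Set (X × Y)) := (LinearMap.graph S).isClosed_topologicalClosure
  haveI : CompleteSpace G := hGclosed.completeSpace_coe
  -- key: for (x, y) ∈ G, T y = T (S x)
  have key : ∀ p : X × Y, p ∈ G → T p.2 = T (S p.1) := by
    intro p hp
    have hcl : p ∈ closure ((LinearMap.graph S : Submodule ℝ (X × Y)) : Set (X × Y)) := hp
    rw [mem_closure_iff_seq_limit] at hcl
    obtain ⟨u, hu, hlim⟩ := hcl
    have h1 : Filter.Tendsto (fun n => (u n).1) Filter.atTop (nhds p.1) :=
      (continuous_fst.tendsto p).comp hlim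
    have h2 : Filter.Tendsto (fun n => (u n).2) Filter.atTop (nhds p.2) :=
      (continuous_snd.tendsto p).comp hlim
    have hgraph : ∀ n, S (u n).1 = (u n).2 := fun n =>
      ((LinearMap.mem_graph_iff S (u n)).mp (hu n)).symm
    have hsep : p.2 - S p.1 ∈ separatingSpace S := by
      refine ⟨fun n => (u n).1 - p.1, ?_, ?_⟩
      · simpa using h1.sub_const p.1
      · have : ∀ n, S ((u n).1 - p.1) = (u n).2 - S p.1 := by
          intro n; rw [map_sub, hgraph n]
        simp only [this]
        exact h2.sub_const (S p.1)
    have := h _ hsep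
    rw [map_sub, sub_eq_zero] at this
    exact this
  -- π : G → X, the first projection, is a surjective bounded linear map
  set π : G →L[ℝ] X := (ContinuousLinearMap.fst ℝ X Y).comp G.subtypeL with hπ
  have hsurj : Function.Surjective π := by
    intro x
    refine ⟨⟨(x, S x), Submodule.le_topologicalClosure _ ?_⟩, rfl⟩
    exact (LinearMap.mem_graph_iff S _).mpr rfl
  have hopen : IsOpenMap π := π.isOpenMap hsurj
  have hquot : Topology.IsQuotientMap π := hopen.isQuotientMap π.continuous hsurj
  rw [hquot.continuous_iff]
  have : (fun x => T (S x)) ∘ π = fun g : G => T (g : X × Y).2 := by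
    funext g
    exact (key g g.2).symm
  rw [this]
  exact T.continuous.comp (continuous_snd.comp continuous_subtype_val)
end

section
/- Every bounded linear map T : ℓ∞ → ℓ¹ is compact. -/
open scoped BigOperators
open Finset

set_option maxHeartbeats 1600000

namespace LinftyL1

attribute [local instance] Classical.propDecidable

noncomputable section

variable {κ ι : Type*} [DecidableEq κ]

def sg (ξ : Finset κ) (j : κ) : ℝ := if j ∈ ξ then 1 else -1


lemma abs_sg (ξ : Finset κ) (j : κ) : |sg ξ j| = 1 := by
  unfold sg; split_ifs <;> norm_num

lemma S2 (J : Finset κ) (c : κ → ℝ) :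
    ∑ ξ ∈ J.powerset, (∑ j ∈ J, sg ξ j * c j) ^ 2
      = 2 ^ J.card * ∑ j ∈ J, (c j) ^ 2 := by
  induction J using Finset.induction_on with
  | empty => simp
  | @insert b J hb ih =>
    rw [Finset.sum_powerset_insert hb]
    have e1 : ∀ ξ ∈ J.powerset, (∑ j ∈ insert b J, sg ξ j * c j) ^ 2
        = (-(c b) + ∑ j ∈ J, sg ξ j * c j) ^ 2 := by
      intro ξ hξ
      rw [Finset.sum_insert hb]
      have hbξ : b ∉ ξ := fun h => hb (Finset.mem_powerset.1 hξ h)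
      rw [sg, if_neg hbξ]; ring_nf
    have e2 : ∀ ξ ∈ J.powerset, (∑ j ∈ insert b J, sg (insert b ξ) j * c j) ^ 2
        = (c b + ∑ j ∈ J, sg ξ j * c j) ^ 2 := by
      intro ξ hξ
      rw [Finset.sum_insert hb]
      have h3 : ∑ j ∈ J, sg (insert b ξ) j * c j = ∑ j ∈ J, sg ξ j * c j := by
        apply Finset.sum_congr rfl
        intro j hj
        have hjb : j ≠ b := fun h => hb (h ▸ hj)
        simp [sg, Finset.mem_insert, hjb]
      rw [h3, sg, if_pos (Finset.mem_insert_self b ξ)]; ring_nf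
    rw [Finset.sum_congr rfl e1, Finset.sum_congr rfl e2]
    have expand : ∀ ξ ∈ J.powerset,
        ((-(c b) + ∑ j ∈ J, sg ξ j * c j) ^ 2)
        = 2 * c b ^ 2 + 2 * (∑ j ∈ J, sg ξ j * c j) ^ 2
          - ((c b + ∑ j ∈ J, sg ξ j * c j) ^ 2) := fun ξ _ => by ring
    rw [Finset.sum_congr rfl expand]
    rw [Finset.sum_sub_distrib, Finset.sum_add_distrib, Finset.sum_const, ← Finset.mul_sum,
      Finset.card_powerset, ih, Finset.sum_insert hb, Finset.card_insert_of_notMem hb]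
    ring

lemma S4 (J : Finset κ) (c : κ → ℝ) :
    ∑ ξ ∈ J.powerset, (∑ j ∈ J, sg ξ j * c j) ^ 4
      ≤ 3 * 2 ^ J.card * (∑ j ∈ J, (c j) ^ 2) ^ 2 := by
  induction J using Finset.induction_on with
  | empty => simp
  | @insert b J hb ih =>
    rw [Finset.sum_powerset_insert hb]
    have e1 : ∀ ξ ∈ J.powerset, (∑ j ∈ insert b J, sg ξ j * c j) ^ 4
        = (-(c b) + ∑ j ∈ J, sg ξ j * c j) ^ 4 := by
      intro ξ hξ
      rw [Finset.sum_insert hb]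
      have hbξ : b ∉ ξ := fun h => hb (Finset.mem_powerset.1 hξ h)
      rw [sg, if_neg hbξ]; ring_nf
    have e2 : ∀ ξ ∈ J.powerset, (∑ j ∈ insert b J, sg (insert b ξ) j * c j) ^ 4
        = (c b + ∑ j ∈ J, sg ξ j * c j) ^ 4 := by
      intro ξ hξ
      rw [Finset.sum_insert hb]
      have h3 : ∑ j ∈ J, sg (insert b ξ) j * c j = ∑ j ∈ J, sg ξ j * c j := by
        apply Finset.sum_congr rfl
        intro j hj
        have hjb : j ≠ b := fun h => hb (h ▸ hj)
        simp [sg, Finset.mem_insert, hjb]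
      rw [h3, sg, if_pos (Finset.mem_insert_self b ξ)]; ring_nf
    rw [Finset.sum_congr rfl e1, Finset.sum_congr rfl e2]
    have expand : ∀ ξ ∈ J.powerset,
        ((-(c b) + ∑ j ∈ J, sg ξ j * c j) ^ 4) + ((c b + ∑ j ∈ J, sg ξ j * c j) ^ 4)
        = 2 * (∑ j ∈ J, sg ξ j * c j) ^ 4
          + 12 * c b ^ 2 * (∑ j ∈ J, sg ξ j * c j) ^ 2 + 2 * c b ^ 4 := fun ξ _ => by ring
    rw [← Finset.sum_add_distrib, Finset.sum_congr rfl expand]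
    rw [Finset.sum_add_distrib, Finset.sum_add_distrib, Finset.sum_const, ← Finset.mul_sum,
      ← Finset.mul_sum, Finset.card_powerset, S2, Finset.sum_insert hb,
      Finset.card_insert_of_notMem hb]
    have h2n : (0:ℝ) < 2 ^ J.card := by positivity
    have hq : (0:ℝ) ≤ ∑ j ∈ J, (c j) ^ 2 := Finset.sum_nonneg fun _ _ => sq_nonneg _
    have hcb : (0:ℝ) ≤ c b ^ 2 := sq_nonneg _
    rw [nsmul_eq_mul]
    have hps : (2:ℝ) ^ (J.card + 1) = 2 ^ J.card * 2 := pow_succ 2 J.card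
    push_cast
    nlinarith [ih, hps, mul_nonneg (mul_nonneg h2n.le hq) hcb,
      mul_nonneg h2n.le (mul_nonneg hcb hcb)]

lemma khintchine_atom (J : Finset κ) (v : κ → ℝ) :
    (2:ℝ) ^ J.card * Real.sqrt (∑ j ∈ J, (v j)^2)
      ≤ Real.sqrt 3 * ∑ ξ ∈ J.powerset, |∑ j ∈ J, sg ξ j * v j| := by
  set q : ℝ := ∑ j ∈ J, (v j)^2 with hq
  have hq0 : 0 ≤ q := Finset.sum_nonneg fun _ _ => sq_nonneg _
  set X : Finset κ → ℝ := fun ξ => ∑ j ∈ J, sg ξ j * v j with hX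
  set A : ℝ := ∑ ξ ∈ J.powerset, |X ξ| with hA
  have hA0 : 0 ≤ A := Finset.sum_nonneg fun _ _ => abs_nonneg _
  rcases eq_or_lt_of_le hq0 with h0 | hqpos
  · rw [← h0, Real.sqrt_zero, mul_zero]
    exact mul_nonneg (Real.sqrt_nonneg 3) hA0
  -- Cauchy–Schwarz 1 : (∑ X²)² ≤ A * ∑ |X|³
  have cs1 : (∑ ξ ∈ J.powerset, (X ξ)^2)^2 ≤ A * ∑ ξ ∈ J.powerset, |X ξ|^3 := by
    have h := Finset.sum_mul_sq_le_sq_mul_sq J.powerset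
      (fun ξ => Real.sqrt |X ξ|) (fun ξ => |X ξ| * Real.sqrt |X ξ|)
    have e1 : ∀ ξ, Real.sqrt |X ξ| * (|X ξ| * Real.sqrt |X ξ|) = (X ξ)^2 := by
      intro ξ
      rw [show Real.sqrt |X ξ| * (|X ξ| * Real.sqrt |X ξ|)
          = (Real.sqrt |X ξ| * Real.sqrt |X ξ|) * |X ξ| by ring,
        Real.mul_self_sqrt (abs_nonneg _), ← abs_mul, abs_mul_self, sq]
    have e2 : ∀ ξ, (Real.sqrt |X ξ|)^2 = |X ξ| := fun ξ => Real.sq_sqrt (abs_nonneg _)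
    have e3 : ∀ ξ, (|X ξ| * Real.sqrt |X ξ|)^2 = |X ξ|^3 := by
      intro ξ
      rw [mul_pow, Real.sq_sqrt (abs_nonneg _)]
      ring
    simp only [e1, e2, e3] at h
    exact h
  -- Cauchy–Schwarz 2 : (∑ |X|³)² ≤ (∑ X²) * (∑ X⁴)
  have cs2 : (∑ ξ ∈ J.powerset, |X ξ|^3)^2
      ≤ (∑ ξ ∈ J.powerset, (X ξ)^2) * ∑ ξ ∈ J.powerset, (X ξ)^4 := by
    have h := Finset.sum_mul_sq_le_sq_mul_sq J.powerset
      (fun ξ => |X ξ|) (fun ξ => (X ξ)^2)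
    have e1 : ∀ ξ, |X ξ| * (X ξ)^2 = |X ξ|^3 := by
      intro ξ
      rw [← sq_abs]
      ring
    have e2 : ∀ ξ, |X ξ|^2 = (X ξ)^2 := fun ξ => sq_abs _
    have e3 : ∀ ξ, ((X ξ)^2)^2 = (X ξ)^4 := fun ξ => by ring
    simp only [e1, e2, e3] at h
    exact h
  have hs2 : ∑ ξ ∈ J.powerset, (X ξ)^2 = 2 ^ J.card * q := S2 J v
  have hs4 : ∑ ξ ∈ J.powerset, (X ξ)^4 ≤ 3 * 2 ^ J.card * q^2 := S4 J v
  have hb3 : 0 ≤ ∑ ξ ∈ J.powerset, |X ξ|^3 :=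
    Finset.sum_nonneg fun ξ _ => pow_nonneg (abs_nonneg _) 3
  have h2n : (0:ℝ) < 2 ^ J.card := by positivity
  -- combine: 2^{2n} q ≤ 3 A²
  have h4 : ((2:ℝ)^J.card*q)^2*((2:ℝ)^J.card*q)^2
      ≤ A^2*(((2:ℝ)^J.card*q)*(3*2^J.card*q^2)) := by
    calc ((2:ℝ)^J.card*q)^2*((2:ℝ)^J.card*q)^2
        = (∑ ξ ∈ J.powerset, (X ξ)^2)^2 * (∑ ξ ∈ J.powerset, (X ξ)^2)^2 := by rw [hs2]
      _ ≤ (A * ∑ ξ ∈ J.powerset, |X ξ|^3) * (A * ∑ ξ ∈ J.powerset, |X ξ|^3) :=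
          mul_le_mul cs1 cs1 (sq_nonneg _) (mul_nonneg hA0 hb3)
      _ = A^2 * (∑ ξ ∈ J.powerset, |X ξ|^3)^2 := by ring
      _ ≤ A^2 * ((∑ ξ ∈ J.powerset, (X ξ)^2) * ∑ ξ ∈ J.powerset, (X ξ)^4) :=
          mul_le_mul_of_nonneg_left cs2 (sq_nonneg A)
      _ ≤ A^2 * (((2:ℝ)^J.card*q) * (3*2^J.card*q^2)) := by
          rw [hs2]
          apply mul_le_mul_of_nonneg_left _ (sq_nonneg A)
          apply mul_le_mul_of_nonneg_left hs4 (by positivity)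
  have key : 2 ^ J.card * (2 ^ J.card * q) ≤ 3 * A^2 := by
    have hc : (0:ℝ) < ((2:ℝ)^J.card)^2 * q^3 := by positivity
    apply le_of_mul_le_mul_right _ hc
    calc 2^J.card*((2:ℝ)^J.card*q) * (((2:ℝ)^J.card)^2*q^3)
        = ((2:ℝ)^J.card*q)^2*((2:ℝ)^J.card*q)^2 := by ring
      _ ≤ A^2*(((2:ℝ)^J.card*q)*(3*2^J.card*q^2)) := h4
      _ = 3*A^2*(((2:ℝ)^J.card)^2*q^3) := by ring
  -- take square roots
  have lhs_eq : (2:ℝ) ^ J.card * Real.sqrt q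
      = Real.sqrt (2 ^ J.card * (2 ^ J.card * q)) := by
    rw [show (2:ℝ) ^ J.card * (2 ^ J.card * q) = ((2:ℝ) ^ J.card)^2 * q by ring,
      Real.sqrt_mul (sq_nonneg _), Real.sqrt_sq h2n.le]
  have rhs_eq : Real.sqrt (3 * A^2) = Real.sqrt 3 * A := by
    rw [Real.sqrt_mul (by norm_num : (0:ℝ) ≤ 3), Real.sqrt_sq hA0]
  rw [lhs_eq, ← rhs_eq]
  exact Real.sqrt_le_sqrt key

lemma khintchine (J : Finset κ) (P : Finset ι) (v : κ → ι → ℝ) (a : ℝ)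
    (hv : ∀ j ∈ J, a ≤ ∑ t ∈ P, |v j t|) :
    ∃ ξ : Finset κ,
      Real.sqrt J.card * a ≤ Real.sqrt 3 * ∑ t ∈ P, |∑ j ∈ J, sg ξ j * v j t| := by
  by_contra hcon
  push_neg at hcon
  set n : ℕ := J.card with hn
  have hppos : (J.powerset).Nonempty := ⟨∅, Finset.empty_mem_powerset J⟩
  have hsum_lt : ∑ ξ ∈ J.powerset, (Real.sqrt 3 * ∑ t ∈ P, |∑ j ∈ J, sg ξ j * v j t|)
      < ∑ ξ ∈ J.powerset, (Real.sqrt n * a) := by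
    apply Finset.sum_lt_sum_of_nonempty hppos
    intro ξ _
    exact hcon ξ
  rcases Nat.eq_zero_or_pos n with h0 | hnpos
  · -- J empty
    have h1 := hcon ∅
    rw [show ((n:ℝ)) = 0 by exact_mod_cast h0, Real.sqrt_zero, zero_mul] at h1
    exact absurd h1 (not_lt.2 (mul_nonneg (Real.sqrt_nonneg 3)
      (Finset.sum_nonneg fun _ _ => abs_nonneg _)))
  -- main case
  have hna : ((n:ℝ)) * a ≤ ∑ t ∈ P, ∑ j ∈ J, |v j t| := by
    rw [Finset.sum_comm]
    calc (n:ℝ) * a = ∑ _j ∈ J, a := by rw [Finset.sum_const, nsmul_eq_mul]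
      _ ≤ ∑ j ∈ J, ∑ t ∈ P, |v j t| := Finset.sum_le_sum hv
  have step2 : ∀ t, ∑ j ∈ J, |v j t| ≤ Real.sqrt n * Real.sqrt (∑ j ∈ J, (v j t)^2) := by
    intro t
    have h := Finset.sum_mul_sq_le_sq_mul_sq J (fun _ => (1:ℝ)) (fun j => |v j t|)
    simp only [one_pow, one_mul, Finset.sum_const, nsmul_eq_mul, mul_one, sq_abs] at h
    have h' : (∑ j ∈ J, |v j t|)^2 ≤ (n:ℝ) * ∑ j ∈ J, (v j t)^2 := by
      simpa using h
    calc ∑ j ∈ J, |v j t| = Real.sqrt ((∑ j ∈ J, |v j t|)^2) :=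
          (Real.sqrt_sq (Finset.sum_nonneg fun _ _ => abs_nonneg _)).symm
      _ ≤ Real.sqrt ((n:ℝ) * ∑ j ∈ J, (v j t)^2) := Real.sqrt_le_sqrt h'
      _ = Real.sqrt n * Real.sqrt (∑ j ∈ J, (v j t)^2) :=
          Real.sqrt_mul (Nat.cast_nonneg n) _
  have step3 : ∀ t, (2:ℝ) ^ n * Real.sqrt (∑ j ∈ J, (v j t)^2)
      ≤ Real.sqrt 3 * ∑ ξ ∈ J.powerset, |∑ j ∈ J, sg ξ j * v j t| :=
    fun t => khintchine_atom J (fun j => v j t)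
  -- putting it together
  have big : (2:ℝ)^n * ((n:ℝ) * a)
      ≤ Real.sqrt n * (Real.sqrt 3 * ∑ ξ ∈ J.powerset, ∑ t ∈ P, |∑ j ∈ J, sg ξ j * v j t|) := by
    calc (2:ℝ)^n * ((n:ℝ) * a) ≤ (2:ℝ)^n * ∑ t ∈ P, ∑ j ∈ J, |v j t| := by
          apply mul_le_mul_of_nonneg_left hna (by positivity)
      _ ≤ (2:ℝ)^n * ∑ t ∈ P, Real.sqrt n * Real.sqrt (∑ j ∈ J, (v j t)^2) := by
          apply mul_le_mul_of_nonneg_left _ (by positivity)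
          exact Finset.sum_le_sum fun t _ => step2 t
      _ = Real.sqrt n * ∑ t ∈ P, (2:ℝ)^n * Real.sqrt (∑ j ∈ J, (v j t)^2) := by
          rw [Finset.mul_sum, Finset.mul_sum]
          congr 1
          funext t
          ring
      _ ≤ Real.sqrt n * ∑ t ∈ P, Real.sqrt 3 * ∑ ξ ∈ J.powerset, |∑ j ∈ J, sg ξ j * v j t| := by
          apply mul_le_mul_of_nonneg_left _ (Real.sqrt_nonneg _)
          exact Finset.sum_le_sum fun t _ => step3 t
      _ = Real.sqrt n * (Real.sqrt 3 * ∑ ξ ∈ J.powerset, ∑ t ∈ P, |∑ j ∈ J, sg ξ j * v j t|) := by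
          rw [← Finset.mul_sum, Finset.sum_comm]
  have hsqn : Real.sqrt n * Real.sqrt n = (n:ℝ) := Real.mul_self_sqrt (Nat.cast_nonneg n)
  have hsqnpos : 0 < Real.sqrt n := Real.sqrt_pos.2 (by exact_mod_cast hnpos)
  -- from hsum_lt: √3 * ∑∑ < 2^n * √n * a
  have hsum_lt' : Real.sqrt 3 * ∑ ξ ∈ J.powerset, ∑ t ∈ P, |∑ j ∈ J, sg ξ j * v j t|
      < 2^n * (Real.sqrt n * a) := by
    have := hsum_lt
    rw [Finset.sum_const, Finset.card_powerset, nsmul_eq_mul, ← Finset.mul_sum] at this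
    simpa [hn] using this
  have final : Real.sqrt n * (Real.sqrt 3 * ∑ ξ ∈ J.powerset, ∑ t ∈ P, |∑ j ∈ J, sg ξ j * v j t|)
      < Real.sqrt n * (2^n * (Real.sqrt n * a)) :=
    mul_lt_mul_of_pos_left hsum_lt' hsqnpos
  have : Real.sqrt n * (2^n * (Real.sqrt n * a)) = (2:ℝ)^n * ((n:ℝ) * a) := by
    rw [show Real.sqrt n * (2^n * (Real.sqrt n * a)) = (2:ℝ)^n * ((Real.sqrt n * Real.sqrt n) * a) by ring, hsqn]
  rw [this] at final
  exact absurd (lt_of_le_of_lt big final) (lt_irrefl _)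


def chi (B : Set ℕ) : lp (fun _ : ℕ => ℝ) ⊤ :=
  ⟨Set.indicator B 1, memℓp_infty ⟨1, by
    rintro x ⟨i, rfl⟩
    by_cases h : i ∈ B <;> simp [Set.indicator, h]⟩⟩

lemma chi_apply (B : Set ℕ) (i : ℕ) : (chi B : ∀ _ : ℕ, ℝ) i = Set.indicator B 1 i := rfl

lemma chi_norm_le (B : Set ℕ) : ‖chi B‖ ≤ 1 := by
  apply lp.norm_le_of_forall_le one_pos.le
  intro i
  rw [chi_apply]
  by_cases h : i ∈ B <;> simp [Set.indicator, h]

lemma chi_union (A B : Set ℕ) (h : Disjoint A B) : chi (A ∪ B) = chi A + chi B := by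
  apply Subtype.ext
  funext i
  simp only [lp.coeFn_add, Pi.add_apply]
  rw [chi_apply, chi_apply, chi_apply, Set.indicator_union_of_disjoint h]


def tail1 (y : lp (fun _ : ℕ => ℝ) 1) (N : ℕ) : ℝ := ∑' k, |(y : ∀ _ : ℕ, ℝ) (k + N)|

lemma hasSum_abs (y : lp (fun _ : ℕ => ℝ) 1) :
    HasSum (fun k => |(y : ∀ _ : ℕ, ℝ) k|) ‖y‖ := by
  have h := lp.hasSum_norm (p := 1) (by norm_num) y
  simpa [Real.norm_eq_abs] using h

lemma summable_abs (y : lp (fun _ : ℕ => ℝ) 1) :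
    Summable (fun k => |(y : ∀ _ : ℕ, ℝ) k|) := (hasSum_abs y).summable

lemma summable_abs_shift (y : lp (fun _ : ℕ => ℝ) 1) (N : ℕ) :
    Summable (fun k => |(y : ∀ _ : ℕ, ℝ) (k + N)|) :=
  (summable_nat_add_iff (f := fun k => |(y : ∀ _ : ℕ, ℝ) k|) N).2 (summable_abs y)

lemma tail1_nonneg (y : lp (fun _ : ℕ => ℝ) 1) (N : ℕ) : 0 ≤ tail1 y N :=
  tsum_nonneg fun _ => abs_nonneg _

lemma tail1_le_norm (y : lp (fun _ : ℕ => ℝ) 1) (N : ℕ) : tail1 y N ≤ ‖y‖ := by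
  rw [← (hasSum_abs y).tsum_eq]
  exact Summable.tsum_le_tsum_of_inj (fun k => k + N) (add_left_injective N)
    (fun c _ => abs_nonneg _) (fun k => le_rfl) (summable_abs_shift y N) (summable_abs y)

lemma norm_split (y : lp (fun _ : ℕ => ℝ) 1) (N : ℕ) :
    ‖y‖ = (∑ k ∈ Finset.range N, |(y : ∀ _ : ℕ, ℝ) k|) + tail1 y N := by
  rw [← (hasSum_abs y).tsum_eq]
  exact (Summable.sum_add_tsum_nat_add (f := fun k => |(y : ∀ _ : ℕ, ℝ) k|) N (summable_abs y)).symm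

lemma tail1_add (y z : lp (fun _ : ℕ => ℝ) 1) (N : ℕ) :
    tail1 (y + z) N ≤ tail1 y N + tail1 z N := by
  unfold tail1
  rw [← Summable.tsum_add (summable_abs_shift y N) (summable_abs_shift z N)]
  apply Summable.tsum_le_tsum _ _ ((summable_abs_shift y N).add (summable_abs_shift z N))
  · intro k
    rw [lp.coeFn_add]
    exact abs_add_le _ _
  · -- summability of LHS
    exact summable_abs_shift (y + z) N

lemma tail1_smul (c : ℝ) (y : lp (fun _ : ℕ => ℝ) 1) (N : ℕ) :
    tail1 (c • y) N = |c| * tail1 y N := by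
  unfold tail1
  rw [← tsum_mul_left]
  congr 1
  funext k
  rw [lp.coeFn_smul, Pi.smul_apply, smul_eq_mul, abs_mul]

lemma tail1_sum {ι : Type} (s : Finset ι) (f : ι → lp (fun _ : ℕ => ℝ) 1) (N : ℕ) :
    tail1 (∑ r ∈ s, f r) N ≤ ∑ r ∈ s, tail1 (f r) N := by
  induction s using Finset.induction_on with
  | empty =>
    simp only [Finset.sum_empty]
    have : tail1 (0 : lp (fun _ : ℕ => ℝ) 1) N ≤ ‖(0 : lp (fun _ : ℕ => ℝ) 1)‖ :=
      tail1_le_norm _ N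
    simpa using this
  | @insert r s hr ih =>
    rw [Finset.sum_insert hr, Finset.sum_insert hr]
    exact le_trans (tail1_add (f r) (∑ x ∈ s, f x) N) (by linarith [ih])


variable (T : lp (fun _ : ℕ => ℝ) ⊤ →L[ℝ] lp (fun _ : ℕ => ℝ) 1)

def mu (B : Set ℕ) (k : ℕ) : ℝ := (T (chi B) : ∀ _ : ℕ, ℝ) k

lemma hasSum_mu (B : Set ℕ) : HasSum (fun k => |mu T B k|) ‖T (chi B)‖ := by
  have h := lp.hasSum_norm (p := 1) (by norm_num) (T (chi B))
  simpa [Real.norm_eq_abs, mu] using h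

lemma summable_mu (B : Set ℕ) : Summable (fun k => |mu T B k|) := (hasSum_mu T B).summable

lemma tsum_mu_le (B : Set ℕ) : ∑' k, |mu T B k| ≤ ‖T‖ := by
  rw [(hasSum_mu T B).tsum_eq]
  calc ‖T (chi B)‖ ≤ ‖T‖ * ‖chi B‖ := T.le_opNorm _
    _ ≤ ‖T‖ * 1 := mul_le_mul_of_nonneg_left (chi_norm_le B) (norm_nonneg T)
    _ = ‖T‖ := mul_one _

lemma mu_union {A B : Set ℕ} (h : Disjoint A B) (k : ℕ) :
    mu T (A ∪ B) k = mu T A k + mu T B k := by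
  unfold mu
  rw [chi_union A B h, map_add, lp.coeFn_add]
  rfl

lemma chi_empty : chi ∅ = 0 := by
  apply Subtype.ext
  funext i
  show Set.indicator ∅ 1 i = (0 : lp (fun _ : ℕ => ℝ) ⊤).val i
  simp

lemma mu_empty (k : ℕ) : mu T ∅ k = 0 := by
  unfold mu
  rw [chi_empty, map_zero]
  simp

/-- tail sum of the image of an indicator. -/
def tl (B : Set ℕ) (N : ℕ) : ℝ := ∑' k, |mu T B (k + N)|

lemma summable_tail (B : Set ℕ) (N : ℕ) : Summable fun k => |mu T B (k + N)| :=
  ((summable_nat_add_iff (f := fun k => |mu T B k|) N).2 (summable_mu T B))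

lemma tl_tendsto (B : Set ℕ) : Filter.Tendsto (tl T B) Filter.atTop (nhds 0) :=
  tendsto_sum_nat_add fun k => |mu T B k|

lemma tl_split (B : Set ℕ) {N M : ℕ} (h : N ≤ M) :
    tl T B N = (∑ k ∈ Finset.Ico N M, |mu T B k|) + tl T B M := by
  have hs := Summable.sum_add_tsum_nat_add (f := fun j => |mu T B (j + N)|) (M - N)
    (summable_tail T B N)
  have h1 : ∀ i : ℕ, i + (M - N) + N = i + M := fun i => by omega
  have h2 : (∑ k ∈ Finset.Ico N M, |mu T B k|) = ∑ i ∈ Finset.range (M - N), |mu T B (i + N)| := by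
    rw [Finset.sum_Ico_eq_sum_range]
    simp [add_comm]
  rw [h2]
  simp only [h1] at hs
  exact (by simpa [tl] using hs.symm)

lemma tl_le (B : Set ℕ) (N : ℕ) : tl T B N ≤ ‖T‖ := by
  refine le_trans ?_ (tsum_mu_le T B)
  exact Summable.tsum_le_tsum_of_inj (fun k => k + N) (add_left_injective N)
    (fun c _ => abs_nonneg _) (fun k => le_rfl) (summable_tail T B N) (summable_mu T B)

lemma tl_nonneg (B : Set ℕ) (N : ℕ) : 0 ≤ tl T B N :=
  tsum_nonneg fun _ => abs_nonneg _


/-! ### atoms of the Boolean algebra generated by finitely many sets -/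

def atomOf (A : ℕ → Set ℕ) (m : ℕ) (t : Finset ℕ) : Set ℕ :=
  {i : ℕ | ∀ j, j < m → (i ∈ A j ↔ j ∈ t)}

def patternOf (A : ℕ → Set ℕ) (m : ℕ) (i : ℕ) : Finset ℕ :=
  (Finset.range m).filter (fun j => i ∈ A j)

lemma pattern_mem (A : ℕ → Set ℕ) (m : ℕ) (i : ℕ) :
    patternOf A m i ∈ (Finset.range m).powerset :=
  Finset.mem_powerset.2 (Finset.filter_subset _ _)

lemma mem_atom_pattern (A : ℕ → Set ℕ) (m : ℕ) (i : ℕ) :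
    i ∈ atomOf A m (patternOf A m i) := by
  intro j hj
  simp [patternOf, Finset.mem_filter, Finset.mem_range, hj]

lemma atom_disjoint (A : ℕ → Set ℕ) (m : ℕ) {t t' : Finset ℕ}
    (ht : t ∈ (Finset.range m).powerset) (ht' : t' ∈ (Finset.range m).powerset)
    (hne : t ≠ t') : Disjoint (atomOf A m t) (atomOf A m t') := by
  rw [Set.disjoint_left]
  intro i hi hi'
  apply hne
  apply Finset.ext
  intro j
  by_cases hj : j < m
  · rw [← hi j hj, ← hi' j hj]
  · constructor
    · intro h; exact absurd (Finset.mem_range.1 (Finset.mem_powerset.1 ht h)) hj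
    · intro h; exact absurd (Finset.mem_range.1 (Finset.mem_powerset.1 ht' h)) hj

lemma set_eq_biUnion_atoms (A : ℕ → Set ℕ) (m : ℕ) {j : ℕ} (hj : j < m) :
    A j = ⋃ t ∈ ((Finset.range m).powerset).filter (fun t => j ∈ t), atomOf A m t := by
  ext i
  simp only [Set.mem_iUnion, exists_prop, Finset.mem_filter]
  constructor
  · intro hi
    refine ⟨patternOf A m i, ⟨pattern_mem A m i, ?_⟩, mem_atom_pattern A m i⟩
    simp [patternOf, Finset.mem_filter, Finset.mem_range, hj, hi]
  · rintro ⟨t, ⟨-, hjt⟩, hit⟩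
    exact (hit j hj).2 hjt

lemma univ_eq_biUnion_atoms (A : ℕ → Set ℕ) (m : ℕ) :
    (Set.univ : Set ℕ) = ⋃ t ∈ (Finset.range m).powerset, atomOf A m t := by
  ext i
  simp only [Set.mem_univ, true_iff, Set.mem_iUnion, exists_prop]
  exact ⟨patternOf A m i, pattern_mem A m i, mem_atom_pattern A m i⟩

lemma mu_biUnion (S : Finset ℕ → Set ℕ) (k : ℕ) (G : Finset (Finset ℕ))
    (hd : ∀ t ∈ G, ∀ t' ∈ G, t ≠ t' → Disjoint (S t) (S t')) :
    mu T (⋃ t ∈ G, S t) k = ∑ t ∈ G, mu T (S t) k := by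
  induction G using Finset.induction_on with
  | empty => simpa using mu_empty T k
  | @insert t G htG ih =>
    have hdisj : Disjoint (S t) (⋃ t' ∈ G, S t') := by
      rw [Set.disjoint_iUnion₂_right]
      intro t' ht'
      exact hd t (Finset.mem_insert_self t G) t' (Finset.mem_insert_of_mem ht')
        (fun h => htG (h ▸ ht'))
    rw [Finset.set_biUnion_insert, mu_union T hdisj, Finset.sum_insert htG,
      ih (fun a ha b hb hab => hd a (Finset.mem_insert_of_mem ha) b
        (Finset.mem_insert_of_mem hb) hab)]

/-! ### the core uniform-tail lemma -/

lemma core (ε : ℝ) (hε : 0 < ε) : ∃ N : ℕ, ∀ B : Set ℕ, tl T B N ≤ ε := by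
  by_contra hcon
  push_neg at hcon
  -- a set with large tail beyond N, for every N
  set Bc : ℕ → Set ℕ := fun N => (hcon N).choose with hBc
  have hBc_big : ∀ N, ε < tl T (Bc N) N := fun N => (hcon N).choose_spec
  -- choose the next cut point
  have hstep : ∀ N : ℕ, ∃ M, N < M ∧ tl T (Bc N) M < ε / 2 := by
    intro N
    have h2 : ∀ᶠ M in Filter.atTop, tl T (Bc N) M < ε / 2 :=
      (tl_tendsto T (Bc N)).eventually_lt_const (by positivity)
    rcases Filter.eventually_atTop.1 h2 with ⟨a, ha⟩
    exact ⟨max (N + 1) a, lt_of_lt_of_le (Nat.lt_succ_self N) (le_max_left _ _),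
      ha _ (le_max_right _ _)⟩
  set Ns : ℕ → ℕ := fun j => Nat.rec 0 (fun _n prev => (hstep prev).choose) j with hNs
  have hNs_succ : ∀ j, Ns (j + 1) = (hstep (Ns j)).choose := fun j => rfl
  set A : ℕ → Set ℕ := fun j => Bc (Ns j) with hA
  have hNs_lt : ∀ j, Ns j < Ns (j + 1) := by
    intro j
    rw [hNs_succ j]
    exact (hstep (Ns j)).choose_spec.1
  have hNs_mono : Monotone Ns := monotone_nat_of_le_succ (fun j => (hNs_lt j).le)
  have hsmall : ∀ j, tl T (A j) (Ns (j + 1)) < ε / 2 := by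
    intro j
    rw [hNs_succ j]
    exact (hstep (Ns j)).choose_spec.2
  have hblock : ∀ j, ε / 2 ≤ ∑ k ∈ Finset.Ico (Ns j) (Ns (j + 1)), |mu T (A j) k| := by
    intro j
    have hsp := tl_split T (A j) (hNs_lt j).le
    have := hBc_big (Ns j)
    have h2 := hsmall j
    linarith
  -- the signed block measures
  set sn : ℕ → ℕ → ℝ := fun j k => if 0 ≤ mu T (A j) k then 1 else -1 with hsn
  set lam : ℕ → Set ℕ → ℝ :=
    fun j B => ∑ k ∈ Finset.Ico (Ns j) (Ns (j + 1)), sn j k * mu T B k with hlam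
  have hlam_self : ∀ j, ε / 2 ≤ lam j (A j) := by
    intro j
    refine le_trans (hblock j) (le_of_eq ?_)
    apply Finset.sum_congr rfl
    intro k _
    rw [hsn]
    by_cases h : 0 ≤ mu T (A j) k
    · simp [h, abs_of_nonneg h]
    · simp only [if_neg h]
      rw [abs_of_neg (lt_of_not_ge h)]
      ring
  have hlam_abs : ∀ j (B : Set ℕ),
      |lam j B| ≤ ∑ k ∈ Finset.Ico (Ns j) (Ns (j + 1)), |mu T B k| := by
    intro j B
    refine le_trans (Finset.abs_sum_le_sum_abs _ _) (le_of_eq ?_)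
    apply Finset.sum_congr rfl
    intro k _
    rw [abs_mul, hsn]
    by_cases h : 0 ≤ mu T (A j) k <;> simp [h]
  have hIco : ∀ (B : Set ℕ) (m : ℕ),
      ∑ j ∈ Finset.range m, ∑ k ∈ Finset.Ico (Ns j) (Ns (j + 1)), |mu T B k|
        = ∑ k ∈ Finset.Ico (Ns 0) (Ns m), |mu T B k| := by
    intro B m
    induction m with
    | zero => simp
    | succ m ih =>
      rw [Finset.sum_range_succ, ih,
        Finset.sum_Ico_consecutive _ (hNs_mono (Nat.zero_le m)) (hNs_lt m).le]
  have hstar : ∀ (B : Set ℕ) (m : ℕ), ∑ j ∈ Finset.range m, |lam j B| ≤ ‖T‖ := by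
    intro B m
    calc ∑ j ∈ Finset.range m, |lam j B|
        ≤ ∑ j ∈ Finset.range m, ∑ k ∈ Finset.Ico (Ns j) (Ns (j + 1)), |mu T B k| :=
          Finset.sum_le_sum fun j _ => hlam_abs j B
      _ = ∑ k ∈ Finset.Ico (Ns 0) (Ns m), |mu T B k| := hIco B m
      _ ≤ ∑' k, |mu T B k| :=
          Summable.sum_le_tsum _ (fun k _ => abs_nonneg _) (summable_mu T B)
      _ ≤ ‖T‖ := tsum_mu_le T B
  -- additivity of lam over disjoint unions of atoms
  have hlam_biUnion : ∀ (m : ℕ) (j : ℕ) (G : Finset (Finset ℕ)),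
      G ⊆ (Finset.range m).powerset →
      lam j (⋃ t ∈ G, atomOf A m t) = ∑ t ∈ G, lam j (atomOf A m t) := by
    intro m j G hG
    have hmu : ∀ k, mu T (⋃ t ∈ G, atomOf A m t) k = ∑ t ∈ G, mu T (atomOf A m t) k := by
      intro k
      exact mu_biUnion T _ k G (fun t ht t' ht' hne =>
        atom_disjoint A m (hG ht) (hG ht') hne)
    rw [hlam]
    simp only [hmu, Finset.mul_sum]
    rw [Finset.sum_comm]
  -- choose m large
  have hT0 : 0 ≤ ‖T‖ := norm_nonneg _
  obtain ⟨m, hm⟩ := exists_nat_gt ((2 * Real.sqrt 3 * (3 * ‖T‖ + 1) / ε) ^ 2)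
  have hsqm : 2 * Real.sqrt 3 * (3 * ‖T‖ + 1) / ε < Real.sqrt m := by
    rw [show (m:ℝ) = ((m:ℕ):ℝ) from rfl] at hm ⊢
    have hx0 : 0 ≤ 2 * Real.sqrt 3 * (3 * ‖T‖ + 1) / ε := by positivity
    exact (Real.lt_sqrt hx0).2 hm
  have hsq3 : 0 < Real.sqrt 3 := Real.sqrt_pos.2 (by norm_num)
  -- apply the Khintchine-type estimate
  set P : Finset (Finset ℕ) := (Finset.range m).powerset with hP
  set v : ℕ → Finset ℕ → ℝ := fun j t => lam j (atomOf A m t) with hv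
  have hv_big : ∀ j ∈ Finset.range m, ε / 2 ≤ ∑ t ∈ P, |v j t| := by
    intro j hj
    have hAj : A j = ⋃ t ∈ P.filter (fun t => j ∈ t), atomOf A m t :=
      set_eq_biUnion_atoms A m (Finset.mem_range.1 hj)
    have h1 : lam j (A j) = ∑ t ∈ P.filter (fun t => j ∈ t), v j t := by
      rw [hAj, hlam_biUnion m j _ (Finset.filter_subset _ _)]
    calc ε / 2 ≤ lam j (A j) := hlam_self j
      _ = ∑ t ∈ P.filter (fun t => j ∈ t), v j t := h1
      _ ≤ ∑ t ∈ P.filter (fun t => j ∈ t), |v j t| :=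
          Finset.sum_le_sum fun t _ => le_abs_self _
      _ ≤ ∑ t ∈ P, |v j t| :=
          Finset.sum_le_sum_of_subset_of_nonneg (Finset.filter_subset _ _)
            (fun t _ _ => abs_nonneg _)
  obtain ⟨ξ, hξ⟩ := khintchine (Finset.range m) P v (ε / 2) hv_big
  rw [Finset.card_range] at hξ
  set w : Finset ℕ → ℝ := fun t => ∑ j ∈ Finset.range m, sg ξ j * v j t with hw
  set Gp : Finset (Finset ℕ) := P.filter (fun t => 0 < w t) with hGp
  set Bstar : Set ℕ := ⋃ t ∈ Gp, atomOf A m t with hBstar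
  -- identities
  have hBval : ∑ j ∈ Finset.range m, sg ξ j * lam j Bstar = ∑ t ∈ Gp, w t := by
    have h1 : ∀ j, lam j Bstar = ∑ t ∈ Gp, v j t := fun j =>
      hlam_biUnion m j Gp (Finset.filter_subset _ _)
    simp only [h1, Finset.mul_sum]
    rw [Finset.sum_comm]
  have hUval : ∑ t ∈ P, w t = ∑ j ∈ Finset.range m, sg ξ j * lam j Set.univ := by
    have h1 : ∀ j, lam j Set.univ = ∑ t ∈ P, v j t := by
      intro j
      rw [show (Set.univ : Set ℕ) = ⋃ t ∈ P, atomOf A m t from univ_eq_biUnion_atoms A m]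
      exact hlam_biUnion m j P (le_refl _)
    simp only [h1, Finset.mul_sum]
    rw [Finset.sum_comm]
  have habs_sg : ∀ (B : Set ℕ), |∑ j ∈ Finset.range m, sg ξ j * lam j B| ≤ ‖T‖ := by
    intro B
    refine le_trans (Finset.abs_sum_le_sum_abs _ _) (le_trans (le_of_eq ?_) (hstar B m))
    apply Finset.sum_congr rfl
    intro j _
    rw [abs_mul, abs_sg, one_mul]
  -- positive part
  have hpos_part : ∑ t ∈ P, (|w t| + w t) = 2 * ∑ t ∈ Gp, w t := by
    rw [← Finset.sum_filter_add_sum_filter_not P (fun t => 0 < w t)]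
    have hz : ∑ t ∈ P.filter (fun t => ¬ 0 < w t), (|w t| + w t) = 0 := by
      apply Finset.sum_eq_zero
      intro t ht
      have : w t ≤ 0 := le_of_not_gt (Finset.mem_filter.1 ht).2
      rw [abs_of_nonpos this]
      ring
    have hp : ∑ t ∈ Gp, (|w t| + w t) = ∑ t ∈ Gp, 2 * w t := by
      apply Finset.sum_congr rfl
      intro t ht
      have : 0 < w t := (Finset.mem_filter.1 ht).2
      rw [abs_of_pos this]
      ring
    rw [hz, hp, add_zero, Finset.mul_sum]
  have hW : Real.sqrt m * (ε / 2) ≤ Real.sqrt 3 * ∑ t ∈ P, |w t| := hξ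
  have hsum_w : |∑ t ∈ P, w t| ≤ ‖T‖ := by rw [hUval]; exact habs_sg _
  have hGp_le : ∑ t ∈ Gp, w t ≤ ‖T‖ := by
    rw [← hBval]
    refine le_trans (le_abs_self _) (habs_sg Bstar)
  -- final numeric contradiction
  have hWbig : 3 * ‖T‖ + 1 < ∑ t ∈ P, |w t| := by
    have h1 : Real.sqrt 3 * (3 * ‖T‖ + 1) < Real.sqrt m * (ε / 2) := by
      have h2 : 2 * Real.sqrt 3 * (3 * ‖T‖ + 1) / ε * (ε / 2)
          = Real.sqrt 3 * (3 * ‖T‖ + 1) := by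
        field_simp
      calc Real.sqrt 3 * (3 * ‖T‖ + 1)
          = 2 * Real.sqrt 3 * (3 * ‖T‖ + 1) / ε * (ε / 2) := h2.symm
        _ < Real.sqrt m * (ε / 2) := by
            apply mul_lt_mul_of_pos_right hsqm (by positivity)
    have h3 : Real.sqrt 3 * (3 * ‖T‖ + 1) < Real.sqrt 3 * ∑ t ∈ P, |w t| :=
      lt_of_lt_of_le h1 hW
    exact lt_of_mul_lt_mul_left h3 hsq3.le
  have hfin : ∑ t ∈ Gp, w t = (∑ t ∈ P, |w t| + ∑ t ∈ P, w t) / 2 := by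
    rw [Finset.sum_add_distrib] at hpos_part
    linarith
  have habs : -(‖T‖) ≤ ∑ t ∈ P, w t := neg_le_of_abs_le hsum_w
  linarith [hGp_le, hfin, hWbig, habs]


/-! ### uniform tails over the unit ball -/

lemma tail_uniform (ε : ℝ) (hε : 0 < ε) :
    ∃ N, ∀ x : lp (fun _ : ℕ => ℝ) ⊤, ‖x‖ ≤ 1 → tail1 (T x) N ≤ ε := by
  set δ : ℝ := ε / (2 * (‖T‖ + 1)) with hδdef
  have hT0 : (0:ℝ) ≤ ‖T‖ := norm_nonneg _
  have hδ : 0 < δ := by positivity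
  set L : ℕ := Nat.floor (2 / δ) with hLdef
  obtain ⟨N, hN⟩ := core T (ε / (2 * (L + 1))) (by positivity)
  refine ⟨N, fun x hx => ?_⟩
  have hxc : ∀ i, |(x : ∀ _ : ℕ, ℝ) i| ≤ 1 := by
    intro i
    have := lp.norm_apply_le_norm (ENNReal.top_ne_zero) x i
    rw [Real.norm_eq_abs] at this
    exact le_trans this hx
  set lev : ℕ → ℕ := fun i => Nat.floor (((x : ∀ _ : ℕ, ℝ) i + 1) / δ) with hlev
  set Bs : ℕ → Set ℕ := fun r => {i | lev i = r} with hBs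
  set x' : lp (fun _ : ℕ => ℝ) ⊤ :=
    ∑ r ∈ Finset.range (L + 1), ((r : ℝ) * δ - 1) • chi (Bs r) with hx'
  have hlev_le : ∀ i, lev i ≤ L := by
    intro i
    apply Nat.floor_le_floor
    exact (div_le_div_iff_of_pos_right hδ).2 (by linarith [hxc i, (abs_le.1 (hxc i)).2])
  -- coordinates of x'
  have hx'_coord : ∀ i, (x' : ∀ _ : ℕ, ℝ) i = (lev i : ℝ) * δ - 1 := by
    intro i
    rw [hx', lp.coeFn_sum, Finset.sum_apply]
    have hterm : ∀ r : ℕ, (⇑(((r : ℝ) * δ - 1) • chi (Bs r)) : ∀ _ : ℕ, ℝ) i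
        = ((r : ℝ) * δ - 1) * Set.indicator (Bs r) 1 i := by
      intro r
      rw [lp.coeFn_smul, Pi.smul_apply, smul_eq_mul, chi_apply]
    rw [Finset.sum_congr rfl (fun r _ => hterm r)]
    rw [Finset.sum_eq_single (lev i)]
    · have hmem : i ∈ Bs (lev i) := rfl
      rw [Set.indicator_of_mem hmem]
      simp
    · intro r _ hne
      have : i ∉ Bs r := fun h => hne (h ▸ rfl)
      rw [Set.indicator_of_notMem this, mul_zero]
    · intro habs
      exact absurd (Finset.mem_range.2 (Nat.lt_succ_of_le (hlev_le i))) habs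
  -- x' is close to x
  have hfloor_bound : ∀ i, |(x : ∀ _ : ℕ, ℝ) i - ((lev i : ℝ) * δ - 1)| ≤ δ := by
    intro i
    have h0 : (0:ℝ) ≤ ((x : ∀ _ : ℕ, ℝ) i + 1) / δ := by
      have hge := (abs_le.1 (hxc i)).1
      exact div_nonneg (by linarith) hδ.le
    have h1 : ((lev i : ℝ)) ≤ ((x : ∀ _ : ℕ, ℝ) i + 1) / δ := Nat.floor_le h0
    have h2 : ((x : ∀ _ : ℕ, ℝ) i + 1) / δ < (lev i : ℝ) + 1 := Nat.lt_floor_add_one _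
    have h1' : (lev i : ℝ) * δ ≤ (x : ∀ _ : ℕ, ℝ) i + 1 := by
      rw [← le_div_iff₀ hδ]
      exact h1
    have h2' : (x : ∀ _ : ℕ, ℝ) i + 1 < ((lev i : ℝ) + 1) * δ := by
      rw [← div_lt_iff₀ hδ]
      exact h2
    rw [abs_le]
    constructor <;> nlinarith
  have hdist : ‖x - x'‖ ≤ δ := by
    apply lp.norm_le_of_forall_le hδ.le
    intro i
    rw [lp.coeFn_sub, Pi.sub_apply, hx'_coord i, Real.norm_eq_abs]
    exact hfloor_bound i
  -- decompose T x
  have hsplit : T x = T x' + T (x - x') := by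
    rw [← map_add]
    congr 1
    abel
  have ht1 : tail1 (T x') N ≤ ε / 2 := by
    have hTx' : T x' = ∑ r ∈ Finset.range (L + 1), ((r : ℝ) * δ - 1) • T (chi (Bs r)) := by
      rw [hx', map_sum]
      apply Finset.sum_congr rfl
      intro r _
      rw [map_smul]
    rw [hTx']
    calc tail1 (∑ r ∈ Finset.range (L + 1), ((r : ℝ) * δ - 1) • T (chi (Bs r))) N
        ≤ ∑ r ∈ Finset.range (L + 1), tail1 (((r : ℝ) * δ - 1) • T (chi (Bs r))) N :=
          tail1_sum _ _ N
      _ = ∑ r ∈ Finset.range (L + 1), |(r : ℝ) * δ - 1| * tail1 (T (chi (Bs r))) N := by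
          apply Finset.sum_congr rfl
          intro r _
          exact tail1_smul _ _ N
      _ ≤ ∑ r ∈ Finset.range (L + 1), 1 * (ε / (2 * (L + 1))) := by
          apply Finset.sum_le_sum
          intro r hr
          have hcoef : |(r : ℝ) * δ - 1| ≤ 1 := by
            have hrL : (r : ℝ) ≤ L := by
              exact_mod_cast Nat.lt_succ_iff.1 (Finset.mem_range.1 hr)
            have hLd : (L : ℝ) * δ ≤ 2 := by
              have h1 : (L : ℝ) ≤ 2 / δ := Nat.floor_le (by positivity)
              rw [← le_div_iff₀ hδ]
              exact h1
            have hrd0 : 0 ≤ (r : ℝ) * δ := by positivity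
            have hrd2 : (r : ℝ) * δ ≤ 2 := le_trans
              (mul_le_mul_of_nonneg_right hrL hδ.le) hLd
            rw [abs_le]
            constructor <;> nlinarith
          exact mul_le_mul hcoef (hN (Bs r)) (tail1_nonneg _ N) one_pos.le
      _ = ε / 2 := by
          rw [Finset.sum_const, Finset.card_range, nsmul_eq_mul, one_mul]
          have key : ∀ a : ℝ, 0 < a → a * (ε / (2 * a)) = ε / 2 := by
            intro a ha
            field_simp
          push_cast
          exact key _ (by positivity)
  have ht2 : tail1 (T (x - x')) N ≤ ε / 2 := by
    calc tail1 (T (x - x')) N ≤ ‖T (x - x')‖ := tail1_le_norm _ N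
      _ ≤ ‖T‖ * ‖x - x'‖ := T.le_opNorm _
      _ ≤ ‖T‖ * δ := mul_le_mul_of_nonneg_left hdist hT0
      _ ≤ ε / 2 := by
          rw [hδdef, ← mul_div_assoc]
          rw [div_le_div_iff₀ (by positivity) (by norm_num : (0:ℝ) < 2)]
          nlinarith
  calc tail1 (T x) N = tail1 (T x' + T (x - x')) N := by rw [← hsplit]
    _ ≤ tail1 (T x') N + tail1 (T (x - x')) N := tail1_add _ _ N
    _ ≤ ε / 2 + ε / 2 := add_le_add ht1 ht2
    _ = ε := by ring


lemma tail1_sub (y z : lp (fun _ : ℕ => ℝ) 1) (N : ℕ) :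
    tail1 (y - z) N ≤ tail1 y N + tail1 z N := by
  have h1 : y - z = y + (-1 : ℝ) • z := by
    rw [neg_one_smul]
    abel
  rw [h1]
  refine le_trans (tail1_add y _ N) ?_
  rw [tail1_smul]
  simp


theorem main : IsCompactOperator T := by
  have hTB : TotallyBounded (T '' Metric.closedBall 0 1) := by
    rw [Metric.totallyBounded_iff]
    intro ε hε
    obtain ⟨N, hN⟩ := tail_uniform T (ε / 4) (by positivity)
    set S := T '' Metric.closedBall 0 1 with hS
    set φ : lp (fun _ : ℕ => ℝ) 1 → (Fin N → ℝ) := fun y j => (y : ∀ _ : ℕ, ℝ) (j : ℕ) with hφ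
    -- the head projection of the image is bounded, hence totally bounded
    have himg_bdd : (φ '' S) ⊆ Metric.closedBall 0 ‖T‖ := by
      rintro - ⟨y, ⟨x, hx, rfl⟩, rfl⟩
      rw [Metric.mem_closedBall, dist_zero_right]
      rw [pi_norm_le_iff_of_nonneg (norm_nonneg T)]
      intro j
      have h1 : ‖(T x : ∀ _ : ℕ, ℝ) (j : ℕ)‖ ≤ ‖T x‖ :=
        lp.norm_apply_le_norm one_ne_zero (T x) (j : ℕ)
      have h2 : ‖T x‖ ≤ ‖T‖ * ‖x‖ := T.le_opNorm x
      have h3 : ‖x‖ ≤ 1 := by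
        rw [Metric.mem_closedBall, dist_zero_right] at hx
        exact hx
      calc ‖φ (T x) j‖ ≤ ‖T x‖ := h1
        _ ≤ ‖T‖ * ‖x‖ := h2
        _ ≤ ‖T‖ * 1 := mul_le_mul_of_nonneg_left h3 (norm_nonneg T)
        _ = ‖T‖ := mul_one _
    have hφTB : TotallyBounded (φ '' S) :=
      (isCompact_closedBall (0 : Fin N → ℝ) ‖T‖).totallyBounded.subset himg_bdd
    obtain ⟨t, hts, htfin, htcov⟩ :=
      Metric.finite_approx_of_totallyBounded hφTB (ε / (4 * (N + 1))) (by positivity)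
    -- pick preimages in S for net points
    have hchoice : ∀ z ∈ t, ∃ y ∈ S, φ y = z := fun z hz => by
      rcases hts hz with ⟨y, hy, rfl⟩
      exact ⟨y, hy, rfl⟩
    choose g hgS hgφ using hchoice
    classical
    refine ⟨{y | ∃ z, ∃ hz : z ∈ t, g z hz = y}, htfin.dependent_image g, ?_⟩
    rintro - ⟨x, hx, rfl⟩
    have hφw : φ (T x) ∈ φ '' S := ⟨T x, ⟨x, hx, rfl⟩, rfl⟩
    have hcov := htcov hφw
    rw [Set.mem_iUnion₂] at hcov
    obtain ⟨z, hz, hball⟩ := hcov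
    rw [Metric.mem_ball] at hball
    rw [Set.mem_iUnion₂]
    refine ⟨g z hz, ⟨z, hz, rfl⟩, ?_⟩
    rw [Metric.mem_ball, dist_eq_norm]
    set y := g z hz with hy
    obtain ⟨x2, hx2, hyx2⟩ := hgS z hz
    have hx1 : ‖x‖ ≤ 1 := by
      rw [Metric.mem_closedBall, dist_zero_right] at hx
      exact hx
    have hx2' : ‖x2‖ ≤ 1 := by
      rw [Metric.mem_closedBall, dist_zero_right] at hx2
      exact hx2
    -- head estimate
    have hhead : ∑ k ∈ Finset.range N, |((T x - y : lp (fun _ : ℕ => ℝ) 1) : ∀ _ : ℕ, ℝ) k|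
        ≤ (N : ℝ) * (ε / (4 * (N + 1))) := by
      rw [← Fin.sum_univ_eq_sum_range
        (fun k => |((T x - y : lp (fun _ : ℕ => ℝ) 1) : ∀ _ : ℕ, ℝ) k|) N]
      have hterm : ∀ j : Fin N,
          |((T x - y : lp (fun _ : ℕ => ℝ) 1) : ∀ _ : ℕ, ℝ) (j : ℕ)| ≤ ε / (4 * (N + 1)) := by
        intro j
        have e1 : ((T x - y : lp (fun _ : ℕ => ℝ) 1) : ∀ _ : ℕ, ℝ) (j : ℕ)
            = φ (T x) j - φ y j := by
          rw [lp.coeFn_sub, Pi.sub_apply]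
        rw [e1, ← Real.dist_eq]
        calc dist (φ (T x) j) (φ y j) ≤ dist (φ (T x)) (φ y) := dist_le_pi_dist _ _ j
          _ = dist (φ (T x)) z := by rw [hgφ z hz]
          _ ≤ ε / (4 * (N + 1)) := hball.le
      calc ∑ j : Fin N, |((T x - y : lp (fun _ : ℕ => ℝ) 1) : ∀ _ : ℕ, ℝ) (j : ℕ)|
          ≤ ∑ _j : Fin N, (ε / (4 * (N + 1))) := Finset.sum_le_sum fun j _ => hterm j
        _ = (N : ℝ) * (ε / (4 * (N + 1))) := by
            rw [Finset.sum_const, Finset.card_univ, Fintype.card_fin, nsmul_eq_mul]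
    -- tail estimate
    have htail : tail1 (T x - y) N ≤ ε / 4 + ε / 4 := by
      refine le_trans (tail1_sub (T x) y N) ?_
      apply add_le_add (hN x hx1)
      rw [hy, ← hyx2]
      exact hN x2 hx2'
    have hNe : (N : ℝ) * (ε / (4 * (N + 1))) ≤ ε / 4 := by
      rw [← mul_div_assoc, div_le_div_iff₀ (by positivity) (by norm_num : (0:ℝ) < 4)]
      nlinarith [hε.le, Nat.cast_nonneg (α := ℝ) N]
    calc ‖T x - y‖
        = (∑ k ∈ Finset.range N, |((T x - y : lp (fun _ : ℕ => ℝ) 1) : ∀ _ : ℕ, ℝ) k|)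
          + tail1 (T x - y) N := norm_split _ N
      _ ≤ (N : ℝ) * (ε / (4 * (N + 1))) + (ε / 4 + ε / 4) := add_le_add hhead htail
      _ ≤ ε / 4 + (ε / 4 + ε / 4) := by linarith
      _ < ε := by linarith
  haveI : CompleteSpace (lp (fun _ : ℕ => ℝ) 1) := by infer_instance
  have hK : IsCompact (closure (T '' Metric.closedBall 0 1)) :=
    TotallyBounded.isCompact_of_isClosed hTB.closure isClosed_closure
  exact ⟨_, hK, Filter.mem_of_superset (Metric.closedBall_mem_nhds 0 one_pos)
    (fun x hx => subset_closure (Set.mem_image_of_mem T hx))⟩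


end

end LinftyL1

/-- Every bounded linear map from ℓ∞ to ℓ¹ is compact. -/
theorem isCompactOperator_of_linfty_to_l1
    (T : lp (fun _ : ℕ => ℝ) ⊤ →L[ℝ] lp (fun _ : ℕ => ℝ) 1) :
    IsCompactOperator T := by
  exact LinftyL1.main T
end

section
/- If Z is a Banach space containing no subspace isomorphic to ℓ¹, then every bounded linear map T : Z → ℓ¹ is compact. -/
set_option maxHeartbeats 1000000

open scoped ENNReal Topology

local notation "ℓ1" => lp (fun _ : ℕ => ℝ) 1

lemma l1_summable (g : ℓ1) : Summable (fun k => |g k|) := by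
  have := lp.memℓp g
  rw [memℓp_gen_iff (by norm_num : (0:ℝ) < (1:ℝ≥0∞).toReal)] at this
  simpa using this

lemma l1_norm_eq (g : ℓ1) : ‖g‖ = ∑' k, |g k| := by
  rw [lp.norm_eq_tsum_rpow (by norm_num) g]
  simp [Real.rpow_one]

lemma l1_pairing (u : ℕ → ℝ) (hu : ∀ k, |u k| ≤ 1) :
    ∃ S : ℓ1 →L[ℝ] ℝ, (∀ g : ℓ1, S g = ∑' k, u k * g k) ∧ ∀ g : ℓ1, |S g| ≤ ‖g‖ := by
  have hsumm : ∀ g : ℓ1, Summable (fun k => u k * g k) := by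
    intro g
    apply Summable.of_norm
    apply Summable.of_nonneg_of_le (fun k => norm_nonneg _) (fun k => ?_) (l1_summable g)
    rw [Real.norm_eq_abs, abs_mul]
    nlinarith [abs_nonneg (g k), hu k, abs_nonneg (u k)]
  have hle : ∀ g : ℓ1, |∑' k, u k * g k| ≤ ‖g‖ := by
    intro g
    rw [l1_norm_eq]
    have h' : Summable fun k => ‖u k * g k‖ := by
      simp only [Real.norm_eq_abs]; exact (hsumm g).abs
    have h1 := norm_tsum_le_tsum_norm h'
    simp only [Real.norm_eq_abs] at h1
    refine h1.trans ?_
    apply Summable.tsum_le_tsum _ ((hsumm g).abs) (l1_summable g)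
    intro k
    rw [abs_mul]
    nlinarith [abs_nonneg (g k), hu k, abs_nonneg (u k)]
  let L : ℓ1 →ₗ[ℝ] ℝ :=
    { toFun := fun g => ∑' k, u k * g k
      map_add' := by
        intro x y
        simp only []
        rw [← Summable.tsum_add (hsumm x) (hsumm y)]
        apply tsum_congr; intro k
        have hx : (x + y) k = x k + y k := by rw [lp.coeFn_add]; rfl
        rw [hx]; ring
      map_smul' := by
        intro c x
        simp only [RingHom.id_apply, smul_eq_mul]
        rw [← tsum_mul_left]
        apply tsum_congr; intro k
        have hx : (c • x) k = c * x k := by rw [lp.coeFn_smul]; rfl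
        rw [hx]; ring }
  refine ⟨L.mkContinuous 1 (fun g => by simpa [L] using hle g), fun g => rfl, fun g => hle g⟩

lemma l1_embed {Z : Type*} [NormedAddCommGroup Z] [NormedSpace ℝ Z] [CompleteSpace Z]
    (z : ℕ → Z) (C : ℝ) (hC : 0 ≤ C) (hz : ∀ i, ‖z i‖ ≤ C) :
    ∃ f : ℓ1 →L[ℝ] Z, ∀ a : ℓ1, f a = ∑' i, (a i) • z i := by
  have hsumm : ∀ a : ℓ1, Summable (fun i => (a i) • z i) := by
    intro a
    apply Summable.of_norm
    apply Summable.of_nonneg_of_le (fun i => norm_nonneg _) (fun i => ?_)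
      ((l1_summable a).mul_right C)
    rw [norm_smul, Real.norm_eq_abs]
    exact mul_le_mul_of_nonneg_left (hz i) (abs_nonneg _)
  have hle : ∀ a : ℓ1, ‖∑' i, (a i) • z i‖ ≤ C * ‖a‖ := by
    intro a
    have h' : Summable fun i => ‖(a i) • z i‖ := by
      apply Summable.of_nonneg_of_le (fun i => norm_nonneg _) (fun i => ?_)
        ((l1_summable a).mul_right C)
      rw [norm_smul, Real.norm_eq_abs]
      exact mul_le_mul_of_nonneg_left (hz i) (abs_nonneg _)
    refine (norm_tsum_le_tsum_norm h').trans ?_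
    rw [l1_norm_eq, ← tsum_mul_left]
    apply Summable.tsum_le_tsum _ h' ((l1_summable a).mul_left C)
    intro i
    rw [norm_smul, Real.norm_eq_abs, mul_comm C]
    exact mul_le_mul_of_nonneg_left (hz i) (abs_nonneg _)
  let L : ℓ1 →ₗ[ℝ] Z :=
    { toFun := fun a => ∑' i, (a i) • z i
      map_add' := by
        intro x y
        simp only []
        rw [← Summable.tsum_add (hsumm x) (hsumm y)]
        apply tsum_congr; intro i
        have hx : (x + y) i = x i + y i := by rw [lp.coeFn_add]; rfl
        rw [hx, add_smul]
      map_smul' := by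
        intro c x
        simp only [RingHom.id_apply]
        rw [← tsum_const_smul'']
        apply tsum_congr; intro i
        have hx : (c • x) i = c * x i := by rw [lp.coeFn_smul]; rfl
        rw [hx, mul_smul] }
  exact ⟨L.mkContinuous C (fun a => hle a), fun a => rfl⟩

lemma sep_seq {X : Type*} [MetricSpace X] [DecidableEq X] {s : Set X} (hs : ¬ TotallyBounded s) :
    ∃ ε > 0, ∃ w : ℕ → X, (∀ n, w n ∈ s) ∧ ∀ i j, i < j → ε ≤ dist (w i) (w j) := by
  rw [Metric.totallyBounded_iff] at hs
  push_neg at hs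
  obtain ⟨ε, hε, hnet⟩ := hs
  have key : ∀ l : List X, ∃ x ∈ s, ∀ y ∈ l, ε ≤ dist x y := by
    intro l
    obtain ⟨x, hxs, hx⟩ := Set.not_subset.1 (hnet (l.toFinset : Set X) l.toFinset.finite_toSet)
    refine ⟨x, hxs, fun y hy => ?_⟩
    by_contra hlt
    push_neg at hlt
    exact hx (Set.mem_iUnion₂.2 ⟨y, by simpa using hy, Metric.mem_ball.2 hlt⟩)
  choose g hg1 hg2 using key
  let Lst : ℕ → List X := fun n => Nat.rec [] (fun _ l => g l :: l) n
  refine ⟨ε, hε, fun n => g (Lst n), fun n => hg1 _, ?_⟩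
  have hmem : ∀ i j, i < j → g (Lst i) ∈ Lst j := by
    intro i j hij
    induction j with
    | zero => omega
    | succ j ih =>
      rcases Nat.lt_succ_iff_lt_or_eq.1 hij with h | h
      · exact List.mem_cons_of_mem _ (ih h)
      · subst h; exact List.mem_cons_self
  intro i j hij
  rw [dist_comm]
  exact hg2 (Lst j) _ (hmem i j hij)

lemma split_tsum (f : ℕ → ℝ) (hf : Summable fun k => |f k|) (M : ℕ) :
    (∑ k ∈ Finset.range M, |f k|) + (∑' k, if M ≤ k then |f k| else 0) = ∑' k, |f k| := by
  have h1 : Summable (fun k => if M ≤ k then |f k| else 0) :=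
    Summable.of_nonneg_of_le (fun k => by positivity)
      (fun k => by split <;> simp [abs_nonneg]) hf
  have h2 : Summable (fun k => if k < M then |f k| else 0) :=
    Summable.of_nonneg_of_le (fun k => by positivity)
      (fun k => by split <;> simp [abs_nonneg]) hf
  have h3 : (∑' k, if k < M then |f k| else 0) = ∑ k ∈ Finset.range M, |f k| := by
    rw [tsum_eq_sum (s := Finset.range M)]
    · apply Finset.sum_congr rfl
      intro k hk
      rw [if_pos (Finset.mem_range.1 hk)]
    · intro k hk
      rw [if_neg (by simpa using Finset.mem_range.not.1 hk)]
  rw [← h3, ← Summable.tsum_add h2 h1]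
  apply tsum_congr
  intro k
  by_cases h : k < M
  · simp [h, Nat.not_le.2 h]
  · simp [h, Nat.le_of_not_lt h]

lemma tail_small (f : ℕ → ℝ) (hf : Summable fun k => |f k|) (δ : ℝ) (hδ : 0 < δ) :
    ∃ M, (∑' k, if M ≤ k then |f k| else 0) ≤ δ := by
  have := hf.hasSum.tendsto_sum_nat
  have hev : ∀ᶠ M in Filter.atTop, (∑' k, |f k|) - δ < ∑ k ∈ Finset.range M, |f k| :=
    this.eventually_const_lt (by linarith [hδ])
  obtain ⟨M, hM⟩ := hev.exists
  refine ⟨M, ?_⟩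
  have := split_tsum f hf M
  linarith

lemma hump (d : ℕ → ℓ1) (hcoord : ∀ k, Filter.Tendsto (fun j => d j k) Filter.atTop (𝓝 0))
    (δ : ℝ) (hδ : 0 < δ) :
    ∃ n m : ℕ → ℕ, StrictMono n ∧ StrictMono m ∧ m 0 = 0 ∧
      ∀ i, (∑' k, if k < m i ∨ m (i+1) ≤ k then |d (n i) k| else 0) ≤ δ := by
  have step : ∀ p : ℕ × ℕ, ∃ q : ℕ × ℕ, p.1 < q.1 ∧ p.2 < q.2 ∧
      (∑ k ∈ Finset.range p.2, |d q.1 k|) ≤ δ/2 ∧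
      (∑' k, if q.2 ≤ k then |d q.1 k| else 0) ≤ δ/2 := by
    intro p
    have hsum0 : Filter.Tendsto (fun j => ∑ k ∈ Finset.range p.2, |d j k|)
        Filter.atTop (𝓝 0) := by
      have : Filter.Tendsto (fun j => ∑ k ∈ Finset.range p.2, |d j k|)
          Filter.atTop (𝓝 (∑ k ∈ Finset.range p.2, (0:ℝ))) := by
        apply tendsto_finset_sum
        intro k _
        simpa using ((hcoord k).abs)
      simpa using this
    have hev : ∀ᶠ j in Filter.atTop, (∑ k ∈ Finset.range p.2, |d j k|) ≤ δ/2 := by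
      exact hsum0.eventually_le_const (show (0:ℝ) < δ/2 by linarith)
    obtain ⟨j, hj1, hj2⟩ := ((Filter.eventually_ge_atTop (p.1+1)).and hev).exists
    obtain ⟨M, hM⟩ := tail_small (fun k => d j k) (l1_summable (d j)) (δ/2) (by linarith)
    refine ⟨(j, max M (p.2+1)), by omega, by simp, hj2, ?_⟩
    refine le_trans ?_ hM
    apply Summable.tsum_le_tsum _ _ _
    · intro k
      by_cases h : max M (p.2+1) ≤ k
      · rw [if_pos h, if_pos (le_trans (le_max_left _ _) h)]
      · rw [if_neg h]
        split <;> simp [abs_nonneg]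
    · exact Summable.of_nonneg_of_le (fun k => by positivity)
        (fun k => by split <;> simp [abs_nonneg]) (l1_summable (d j))
    · exact Summable.of_nonneg_of_le (fun k => by positivity)
        (fun k => by split <;> simp [abs_nonneg]) (l1_summable (d j))
  let F : ℕ → ℕ × ℕ := fun i =>
    Nat.rec (Classical.choose (step (0,0))) (fun _ p => Classical.choose (step p)) i
  have hF0 : F 0 = Classical.choose (step (0,0)) := rfl
  have hFs : ∀ i, F (i+1) = Classical.choose (step (F i)) := fun i => rfl
  set n : ℕ → ℕ := fun i => (F i).1 with hn
  set m : ℕ → ℕ := fun i => Nat.rec 0 (fun i _ => (F i).2) i with hm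
  have hm0 : m 0 = 0 := rfl
  have hms : ∀ i, m (i+1) = (F i).2 := fun i => rfl
  have key : ∀ i, (if i = 0 then 0 else n (i-1)) < n i ∧ m i < m (i+1) ∧
      (∑ k ∈ Finset.range (m i), |d (n i) k|) ≤ δ/2 ∧
      (∑' k, if m (i+1) ≤ k then |d (n i) k| else 0) ≤ δ/2 := by
    intro i
    cases i with
    | zero =>
      have h := Classical.choose_spec (step (0,0))
      rw [← hF0] at h
      exact ⟨by simpa using h.1, h.2.1, h.2.2.1, h.2.2.2⟩
    | succ i =>
      have h := Classical.choose_spec (step (F i))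
      rw [← hFs i] at h
      exact ⟨by simpa using h.1, h.2.1, h.2.2.1, h.2.2.2⟩
  refine ⟨n, m, strictMono_nat_of_lt_succ (fun i => by simpa using (key (i+1)).1),
    strictMono_nat_of_lt_succ (fun i => (key i).2.1), hm0, ?_⟩
  intro i
  obtain ⟨-, -, hlow, hhigh⟩ := key i
  have hs1 : Summable (fun k => if k < m i then |d (n i) k| else 0) :=
    Summable.of_nonneg_of_le (fun k => by positivity)
      (fun k => by split <;> simp [abs_nonneg]) (l1_summable (d (n i)))
  have hs2 : Summable (fun k => if m (i+1) ≤ k then |d (n i) k| else 0) :=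
    Summable.of_nonneg_of_le (fun k => by positivity)
      (fun k => by split <;> simp [abs_nonneg]) (l1_summable (d (n i)))
  have heq : (∑' k, if k < m i ∨ m (i+1) ≤ k then |d (n i) k| else 0)
      = (∑' k, if k < m i then |d (n i) k| else 0)
        + (∑' k, if m (i+1) ≤ k then |d (n i) k| else 0) := by
    rw [← Summable.tsum_add hs1 hs2]
    apply tsum_congr
    intro k
    have hmono : m i ≤ m (i+1) := le_of_lt (key i).2.1
    by_cases h1 : k < m i
    · rw [if_pos (Or.inl h1), if_pos h1, if_neg (by omega)]
      ring
    · by_cases h2 : m (i+1) ≤ k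
      · rw [if_pos (Or.inr h2), if_neg h1, if_pos h2]; ring
      · rw [if_neg (by tauto), if_neg h1, if_neg h2]; ring
  have hfin : (∑' k, if k < m i then |d (n i) k| else 0)
      = ∑ k ∈ Finset.range (m i), |d (n i) k| := by
    rw [tsum_eq_sum (s := Finset.range (m i))]
    · apply Finset.sum_congr rfl
      intro k hk
      rw [if_pos (Finset.mem_range.1 hk)]
    · intro k hk
      rw [if_neg (by simpa using Finset.mem_range.not.1 hk)]
  rw [heq, hfin]
  linarith

lemma real_sign_mul_self (x : ℝ) : Real.sign x * x = |x| := by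
  rcases lt_trichotomy x 0 with h | h | h
  · rw [Real.sign_of_neg h, abs_of_neg h]; ring
  · simp [h]
  · rw [Real.sign_of_pos h, abs_of_pos h]; ring

lemma abs_sign_le (x : ℝ) : |Real.sign x| ≤ 1 := by
  rcases lt_trichotomy x 0 with h | h | h
  · rw [Real.sign_of_neg h]; norm_num
  · simp [h]
  · rw [Real.sign_of_pos h]; norm_num

lemma l1_lower (c : ℕ → ℓ1) (ε M : ℝ) (hε : 0 < ε)
    (hnorm : ∀ i, ε ≤ ‖c i‖) (hbdd : ∀ i, ‖c i‖ ≤ M)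
    (m : ℕ → ℕ) (hm : StrictMono m) (hm0 : m 0 = 0)
    (hoff : ∀ i, (∑' k, if k < m i ∨ m (i+1) ≤ k then |c i k| else 0) ≤ ε/4)
    (a : ℓ1) : (ε/2) * ‖a‖ ≤ ‖∑' i, (a i) • c i‖ := by
  classical
  -- the index of the block containing k
  set idx : ℕ → ℕ := fun k => Nat.findGreatest (fun i => m i ≤ k) k with hidx
  have idx_eq : ∀ i k, m i ≤ k → k < m (i+1) → idx k = i := by
    intro i k h1 h2
    have hik : i ≤ k := le_trans (hm.le_apply) h1
    have hge : i ≤ idx k := Nat.le_findGreatest hik h1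
    have hspec : m (idx k) ≤ k := Nat.findGreatest_spec (P := fun i => m i ≤ k) hik h1
    by_contra hne
    have : i + 1 ≤ idx k := by omega
    have := hm.monotone this
    omega
  set u : ℕ → ℝ := fun k => Real.sign (a (idx k)) * Real.sign (c (idx k) k) with hu
  have hu1 : ∀ k, |u k| ≤ 1 := by
    intro k
    rw [hu, abs_mul]
    have := abs_sign_le (a (idx k))
    have := abs_sign_le (c (idx k) k)
    nlinarith [abs_nonneg (Real.sign (a (idx k))), abs_nonneg (Real.sign (c (idx k) k))]
  obtain ⟨S, hS, hSle⟩ := l1_pairing u hu1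
  have hM0 : 0 < M := lt_of_lt_of_le hε ((hnorm 0).trans (hbdd 0))
  have hsumm : Summable (fun i => (a i) • c i) := by
    apply Summable.of_norm
    apply Summable.of_nonneg_of_le (fun i => norm_nonneg _) (fun i => ?_)
      ((l1_summable a).mul_right M)
    rw [norm_smul, Real.norm_eq_abs]
    exact mul_le_mul_of_nonneg_left (hbdd i) (abs_nonneg _)
  -- block/off-block decomposition for each i
  have hblock : ∀ i, |a i| * (ε/2) ≤ (a i) * S (c i) := by
    intro i
    have hsummc : Summable fun k => |c i k| := l1_summable (c i)
    have hsB : Summable (fun k => if m i ≤ k ∧ k < m (i+1) then |c i k| else 0) :=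
      Summable.of_nonneg_of_le (fun k => by positivity)
        (fun k => by split <;> simp [abs_nonneg]) hsummc
    have hsOff : Summable (fun k => if k < m i ∨ m (i+1) ≤ k then |c i k| else 0) :=
      Summable.of_nonneg_of_le (fun k => by positivity)
        (fun k => by split <;> simp [abs_nonneg]) hsummc
    have hcompl : ∀ k, (m i ≤ k ∧ k < m (i+1)) ↔ ¬(k < m i ∨ m (i+1) ≤ k) := by omega
    set B : ℝ := ∑' k, if m i ≤ k ∧ k < m (i+1) then |c i k| else 0 with hB
    -- B ≥ ε - ε/4
    have hBnorm : ‖c i‖ = B + ∑' k, (if k < m i ∨ m (i+1) ≤ k then |c i k| else 0) := by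
      rw [l1_norm_eq, hB, ← Summable.tsum_add hsB hsOff]
      apply tsum_congr
      intro k
      by_cases hk : m i ≤ k ∧ k < m (i+1)
      · rw [if_pos hk, if_neg ((hcompl k).1 hk)]; ring
      · rw [if_neg hk, if_pos (by omega)]; ring
    have hBge : ε - ε/4 ≤ B := by
      have := hnorm i
      have := hoff i
      linarith [hBnorm]
    -- S (c i) decomposition
    have hsc : S (c i) = Real.sign (a i) * B
        + ∑' k, (if m i ≤ k ∧ k < m (i+1) then 0 else u k * c i k) := by
      rw [hS, hB, ← tsum_mul_left]
      have hs1 : Summable fun k => Real.sign (a i) *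
          (if m i ≤ k ∧ k < m (i+1) then |c i k| else 0) :=
        hsB.mul_left _
      have hs2 : Summable fun k => (if m i ≤ k ∧ k < m (i+1) then 0 else u k * c i k) := by
        apply Summable.of_norm
        apply Summable.of_nonneg_of_le (fun k => norm_nonneg _) (fun k => ?_) hsummc
        rw [Real.norm_eq_abs]
        split
        · simp [abs_nonneg]
        · rw [abs_mul]
          nlinarith [hu1 k, abs_nonneg (u k), abs_nonneg (c i k)]
      rw [← Summable.tsum_add hs1 hs2]
      apply tsum_congr
      intro k
      by_cases hk : m i ≤ k ∧ k < m (i+1)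
      · rw [if_pos hk, if_pos hk]
        have : idx k = i := idx_eq i k hk.1 hk.2
        rw [hu]
        simp only [this]
        rw [mul_assoc, real_sign_mul_self]
        ring
      · rw [if_neg hk, if_neg hk]; ring
    -- remainder bound
    have hrem : |∑' k, (if m i ≤ k ∧ k < m (i+1) then 0 else u k * c i k)| ≤ ε/4 := by
      have hs2 : Summable fun k => ‖(if m i ≤ k ∧ k < m (i+1) then 0 else u k * c i k)‖ := by
        apply Summable.of_nonneg_of_le (fun k => norm_nonneg _) (fun k => ?_) hsummc
        rw [Real.norm_eq_abs]
        split
        · simp [abs_nonneg]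
        · rw [abs_mul]
          nlinarith [hu1 k, abs_nonneg (u k), abs_nonneg (c i k)]
      have h1 := norm_tsum_le_tsum_norm hs2
      rw [Real.norm_eq_abs] at h1
      refine h1.trans (le_trans ?_ (hoff i))
      apply Summable.tsum_le_tsum _ hs2 hsOff
      intro k
      rw [Real.norm_eq_abs]
      by_cases hk : m i ≤ k ∧ k < m (i+1)
      · rw [if_pos hk, if_neg ((hcompl k).1 hk)]; simp
      · rw [if_neg hk, if_pos (by omega), abs_mul]
        nlinarith [hu1 k, abs_nonneg (u k), abs_nonneg (c i k)]
    rw [hsc, mul_add, ← mul_assoc, mul_comm (a i) (Real.sign (a i)), real_sign_mul_self]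
    have h1 : |a i| * (ε - ε/4) ≤ |a i| * B :=
      mul_le_mul_of_nonneg_left hBge (abs_nonneg _)
    have h2 : -( |a i| * (ε/4)) ≤ a i * ∑' k, (if m i ≤ k ∧ k < m (i+1) then 0 else u k * c i k) := by
      have := abs_mul (a i) (∑' k, (if m i ≤ k ∧ k < m (i+1) then 0 else u k * c i k))
      have h3 : |a i * ∑' k, (if m i ≤ k ∧ k < m (i+1) then 0 else u k * c i k)| ≤ |a i| * (ε/4) := by
        rw [this]
        exact mul_le_mul_of_nonneg_left hrem (abs_nonneg _)
      linarith [neg_abs_le (a i * ∑' k, (if m i ≤ k ∧ k < m (i+1) then 0 else u k * c i k))]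
    nlinarith [abs_nonneg (a i)]
  -- sum up
  have hmap : S (∑' i, (a i) • c i) = ∑' i, (a i) * S (c i) := by
    rw [S.map_tsum hsumm]
    apply tsum_congr
    intro i
    rw [S.map_smul]
    simp
  have hsummS : Summable (fun i => (a i) * S (c i)) := by
    apply Summable.of_norm
    apply Summable.of_nonneg_of_le (fun i => norm_nonneg _) (fun i => ?_)
      ((l1_summable a).mul_right M)
    rw [Real.norm_eq_abs, abs_mul]
    have := (hSle (c i)).trans (hbdd i)
    nlinarith [abs_nonneg (a i), abs_nonneg (S (c i))]
  have hsum_lhs : (ε/2) * ‖a‖ = ∑' i, |a i| * (ε/2) := by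
    rw [l1_norm_eq, tsum_mul_right, mul_comm]
  calc (ε/2) * ‖a‖ = ∑' i, |a i| * (ε/2) := hsum_lhs
    _ ≤ ∑' i, (a i) * S (c i) :=
        Summable.tsum_le_tsum hblock ((l1_summable a).mul_right _) hsummS
    _ = S (∑' i, (a i) • c i) := hmap.symm
    _ ≤ |S (∑' i, (a i) • c i)| := le_abs_self _
    _ ≤ ‖∑' i, (a i) • c i‖ := hSle _

/-- If a Banach space Z contains no subspace isomorphic to ℓ¹ (i.e., there is no bounded
linear embedding of ℓ¹ into Z that is bounded below), then every bounded linear map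
from Z to ℓ¹ is compact. -/
theorem isCompactOperator_of_no_l1_copy
    {Z : Type*} [NormedAddCommGroup Z] [NormedSpace ℝ Z] [CompleteSpace Z]
    (h : ¬ ∃ (f : lp (fun _ : ℕ => ℝ) 1 →L[ℝ] Z) (c : ℝ), 0 < c ∧
      ∀ x, c * ‖x‖ ≤ ‖f x‖)
    (T : Z →L[ℝ] lp (fun _ : ℕ => ℝ) 1) :
    IsCompactOperator T := by
  classical
  apply (isCompactOperator_iff_isCompact_closure_image_ball (𝕜₁ := ℝ)
    T.toLinearMap one_pos).2
  rw [isCompact_iff_totallyBounded_isComplete]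
  refine ⟨?_, isClosed_closure.isComplete⟩
  suffices hTB : TotallyBounded (⇑T '' Metric.ball 0 1) from hTB.closure
  by_contra hTB
  obtain ⟨ε, hε, w, hw_mem, hw_sep⟩ := sep_seq hTB
  choose x hx_mem hTx using hw_mem
  have hx1 : ∀ j, ‖x j‖ ≤ 1 := fun j => le_of_lt (by simpa using Metric.mem_ball.1 (hx_mem j))
  have hw_bdd : ∀ j, ‖w j‖ ≤ ‖T‖ := by
    intro j
    rw [← hTx j]
    calc ‖T (x j)‖ ≤ ‖T‖ * ‖x j‖ := T.le_opNorm _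
      _ ≤ ‖T‖ * 1 := by
          exact mul_le_mul_of_nonneg_left (hx1 j) (norm_nonneg T)
      _ = ‖T‖ := mul_one _
  -- coordinatewise convergent subsequence via compactness of a product of intervals
  have hyK : ∀ j, (fun k => w j k) ∈ Set.pi Set.univ (fun _ : ℕ => Set.Icc (-‖T‖) ‖T‖) := by
    intro j
    intro k _
    have h1 : |w j k| ≤ ‖w j‖ := by
      simpa using lp.norm_apply_le_norm (one_ne_zero) (w j) k
    have := (h1.trans (hw_bdd j))
    rw [abs_le] at this
    exact ⟨this.1, this.2⟩
  have hK : IsCompact (Set.pi Set.univ (fun _ : ℕ => Set.Icc (-‖T‖) ‖T‖)) :=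
    isCompact_univ_pi (fun _ => isCompact_Icc)
  obtain ⟨L, -, φ, hφ, hLconv⟩ := hK.tendsto_subseq hyK
  -- differences
  set d : ℕ → ℓ1 := fun j => w (φ (2*j+1)) - w (φ (2*j)) with hd
  have hd_coord : ∀ k, Filter.Tendsto (fun j => d j k) Filter.atTop (𝓝 0) := by
    intro k
    have hpt := fun (ψ : ℕ → ℕ) (hψ : Filter.Tendsto ψ Filter.atTop Filter.atTop) =>
      ((tendsto_pi_nhds.1 (hLconv.comp hψ)) k)
    have hmono1 : ∀ j : ℕ, j ≤ 2*j+1 := fun j => by omega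
    have hmono2 : ∀ j : ℕ, j ≤ 2*j := fun j => by omega
    have h1 := hpt (fun j => 2*j+1) (Filter.tendsto_atTop_mono hmono1 Filter.tendsto_id)
    have h2 := hpt (fun j => 2*j) (Filter.tendsto_atTop_mono hmono2 Filter.tendsto_id)
    have := h1.sub h2
    rw [sub_self] at this
    apply this.congr
    intro j
    rw [hd]
    simp only []
    rw [lp.coeFn_sub]
    rfl
  have hd_norm : ∀ j, ε ≤ ‖d j‖ := by
    intro j
    have hlt : φ (2*j) < φ (2*j+1) := hφ (by omega)
    have := hw_sep _ _ hlt
    rw [dist_eq_norm] at this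
    rw [hd]
    simpa [← norm_neg (w (φ (2*j)) - w (φ (2*j+1)))] using this
  have hd_bdd : ∀ j, ‖d j‖ ≤ 2 * ‖T‖ := by
    intro j
    rw [hd]
    calc ‖w (φ (2*j+1)) - w (φ (2*j))‖ ≤ ‖w (φ (2*j+1))‖ + ‖w (φ (2*j))‖ := norm_sub_le _ _
      _ ≤ ‖T‖ + ‖T‖ := add_le_add (hw_bdd _) (hw_bdd _)
      _ = 2 * ‖T‖ := by ring
  -- gliding hump
  obtain ⟨n, m, hn, hm, hm0, hoffm⟩ := hump d hd_coord (ε/4) (by linarith)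
  set c : ℕ → ℓ1 := fun i => d (n i) with hc
  set z : ℕ → Z := fun i => x (φ (2*(n i)+1)) - x (φ (2*(n i))) with hz
  have hTz : ∀ i, T (z i) = c i := by
    intro i
    rw [hz, hc, hd]
    simp only []
    rw [map_sub, hTx, hTx]
  have hz_bdd : ∀ i, ‖z i‖ ≤ 2 := by
    intro i
    rw [hz]
    calc ‖x (φ (2*(n i)+1)) - x (φ (2*(n i)))‖
        ≤ ‖x (φ (2*(n i)+1))‖ + ‖x (φ (2*(n i)))‖ := norm_sub_le _ _
      _ ≤ 1 + 1 := add_le_add (hx1 _) (hx1 _)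
      _ = 2 := by norm_num
  obtain ⟨f, hf⟩ := l1_embed z 2 (by norm_num) hz_bdd
  -- T ∘ f
  have hsummz : ∀ a : ℓ1, Summable (fun i => (a i) • z i) := by
    intro a
    apply Summable.of_norm
    apply Summable.of_nonneg_of_le (fun i => norm_nonneg _) (fun i => ?_)
      ((l1_summable a).mul_right 2)
    rw [norm_smul, Real.norm_eq_abs]
    exact mul_le_mul_of_nonneg_left (hz_bdd i) (abs_nonneg _)
  have hTf : ∀ a : ℓ1, T (f a) = ∑' i, (a i) • c i := by
    intro a
    rw [hf, T.map_tsum (hsummz a)]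
    apply tsum_congr
    intro i
    rw [T.map_smul, hTz]
  -- lower bound
  have hTpos : 0 < ‖T‖ := by
    by_contra hT0
    push_neg at hT0
    have := (hd_norm 0).trans (hd_bdd 0)
    nlinarith
  have hlow : ∀ a : ℓ1, (ε/2) * ‖a‖ ≤ ‖T‖ * ‖f a‖ := by
    intro a
    have h1 := l1_lower c ε (2*‖T‖) hε (fun i => hd_norm (n i)) (fun i => hd_bdd (n i))
      m hm hm0 hoffm a
    rw [← hTf a] at h1
    exact h1.trans (T.le_opNorm _)
  exact h ⟨f, ε/(2*‖T‖), by positivity, fun a => by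
    have := hlow a
    rw [div_mul_eq_mul_div, div_le_iff₀ (by linarith : (0:ℝ) < 2*‖T‖)]
    nlinarith [hlow a]⟩
end

section
/- Let Z be a Banach space such that every bounded linear map from Z into ℓ¹ (over ℕ) is compact, let Ξ be an index set, and let T : Z → ℓ¹(Ξ) be a bounded linear map. Then T is compact. -/
open Function
open scoped ENNReal

theorem lp_one_norm_eq {α : Type*} (y : lp (fun _ : α => ℝ) 1) : ‖y‖ = ∑' i, ‖y i‖ := by
  have hp : (0 : ℝ) < (1 : ℝ≥0∞).toReal := by norm_num
  rw [lp.norm_eq_tsum_rpow hp]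
  simp [Real.rpow_one]

theorem lp_one_summable {α : Type*} (y : lp (fun _ : α => ℝ) 1) : Summable fun i => ‖y i‖ := by
  have hp : (0 : ℝ) < (1 : ℝ≥0∞).toReal := by norm_num
  have := lp.memℓp y
  rw [memℓp_gen_iff hp] at this
  simpa [Real.rpow_one] using this

theorem exists_transfer_clm {Ξ : Type*} (Γ : Set Ξ) (e : Γ → ℕ) (he : Function.Injective e) :
    ∃ Φ : lp (fun _ : Ξ => ℝ) 1 →L[ℝ] lp (fun _ : ℕ => ℝ) 1,
      ∀ x : lp (fun _ : Ξ => ℝ) 1, Function.support ⇑x ⊆ Γ → ‖Φ x‖ = ‖x‖ := by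
  have hp : (0 : ℝ) < (1 : ℝ≥0∞).toReal := by norm_num
  set F : lp (fun _ : Ξ => ℝ) 1 → (ℕ → ℝ) :=
    fun x => Function.extend e (fun γ : Γ => x γ) 0 with hF
  have hFnorm : ∀ x, (fun n => ‖F x n‖) = Function.extend e (fun γ : Γ => ‖x γ‖) 0 := by
    intro x
    funext n
    rcases em (∃ γ, e γ = n) with ⟨γ, rfl⟩ | hn
    · simp only [hF, he.extend_apply]
    · simp only [hF, Function.extend_apply' _ _ _ hn]
      simp
  have hmem : ∀ x, Memℓp (F x) 1 := by
    intro x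
    rw [memℓp_gen_iff hp]
    simp only [ENNReal.toReal_one, Real.rpow_one]
    rw [hFnorm x, summable_extend_zero he]
    exact (lp_one_summable x).subtype Γ
  have hFtsum : ∀ x, ∑' n, ‖F x n‖ = ∑' γ : Γ, ‖x γ‖ := by
    intro x
    rw [hFnorm x]
    exact ((hasSum_extend_zero he).2 ((lp_one_summable x).subtype Γ).hasSum).tsum_eq
  set Φ₀ : lp (fun _ : Ξ => ℝ) 1 →ₗ[ℝ] lp (fun _ : ℕ => ℝ) 1 :=
    { toFun := fun x => ⟨F x, hmem x⟩
      map_add' := by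
        intro x y
        apply lp.ext
        funext n
        show F (x + y) n = F x n + F y n
        rcases em (∃ γ, e γ = n) with ⟨γ, rfl⟩ | hn
        · simp only [hF, he.extend_apply]
          rw [lp.coeFn_add]
          simp
        · simp only [hF, Function.extend_apply' _ _ _ hn]
          simp
      map_smul' := by
        intro c x
        apply lp.ext
        funext n
        show F (c • x) n = c • F x n
        rcases em (∃ γ, e γ = n) with ⟨γ, rfl⟩ | hn
        · simp only [hF, he.extend_apply]
          rw [lp.coeFn_smul]
          simp
        · simp only [hF, Function.extend_apply' _ _ _ hn]
          simp } with hΦ₀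
  have happ : ∀ x n, (Φ₀ x) n = F x n := fun _ _ => rfl
  have hbound : ∀ x, ‖Φ₀ x‖ ≤ 1 * ‖x‖ := by
    intro x
    rw [one_mul, lp_one_norm_eq (Φ₀ x), lp_one_norm_eq x]
    have h1 : ∑' n, ‖(Φ₀ x) n‖ = ∑' γ : Γ, ‖x γ‖ := hFtsum x
    rw [h1, tsum_subtype Γ (fun ξ => ‖x ξ‖)]
    exact Summable.tsum_le_tsum (fun ξ => Set.indicator_le_self' (fun ξ _ => norm_nonneg _) ξ)
      ((lp_one_summable x).indicator Γ) (lp_one_summable x)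
  refine ⟨Φ₀.mkContinuous 1 hbound, ?_⟩
  intro x hsupp
  have heq : ∑' γ : Γ, ‖x γ‖ = ∑' ξ, ‖x ξ‖ := by
    refine tsum_subtype_eq_of_support_subset (f := fun ξ => ‖x ξ‖) (s := Γ) ?_
    intro ξ hξ
    exact hsupp (by simpa [norm_ne_zero_iff] using hξ)
  have h1 : ∑' n, ‖(Φ₀ x) n‖ = ∑' γ : Γ, ‖x γ‖ := hFtsum x
  rw [show (Φ₀.mkContinuous 1 hbound) x = Φ₀ x from rfl,
    lp_one_norm_eq (Φ₀ x), lp_one_norm_eq x, h1, heq]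

/-- If every bounded linear map from Z into ℓ¹(ℕ) is compact, then every bounded linear
map from Z into ℓ¹(Ξ), for any index set Ξ, is compact. -/
theorem isCompactOperator_into_l1_of_index_set
    {Z : Type*} [NormedAddCommGroup Z] [NormedSpace ℝ Z] [CompleteSpace Z]
    (h : ∀ T : Z →L[ℝ] lp (fun _ : ℕ => ℝ) 1, IsCompactOperator T)
    (Ξ : Type*) (T : Z →L[ℝ] lp (fun _ : Ξ => ℝ) 1) :
    IsCompactOperator T := by
  haveI : Fact ((1 : ℝ≥0∞) ≤ 1) := ⟨le_refl _⟩
  -- it suffices that the closure of the image of the unit closed ball is (seq) compact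
  have key : IsSeqCompact (closure (⇑T '' Metric.closedBall 0 1)) := by
    intro u hu
    -- approximate u n by T (z n) with z n in the ball
    have happrox : ∀ n : ℕ, ∃ z : Z, z ∈ Metric.closedBall (0:Z) 1 ∧
        dist (u n) (T z) < 1 / (n + 1) := by
      intro n
      have hn : (0:ℝ) < 1 / (n + 1) := by positivity
      obtain ⟨y, hy, hyd⟩ := Metric.mem_closure_iff.1 (hu n) _ hn
      obtain ⟨z, hz, rfl⟩ := hy
      exact ⟨z, hz, hyd⟩
    choose z hz hzd using happrox
    -- countable set containing all supports
    set Γ : Set Ξ := ⋃ n, Function.support ⇑(T (z n)) with hΓdef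
    have hΓc : Γ.Countable := by
      refine Set.countable_iUnion fun n => ?_
      have := (lp_one_summable (T (z n))).countable_support
      refine this.mono ?_
      intro ξ hξ
      simp only [Function.mem_support] at hξ ⊢
      simpa [norm_ne_zero_iff] using hξ
    haveI : Countable Γ := hΓc.to_subtype
    obtain ⟨e, he⟩ := Countable.exists_injective_nat Γ
    obtain ⟨Φ, hΦ⟩ := exists_transfer_clm Γ e he
    -- the composite operator into ℓ¹(ℕ) is compact
    have hScompact : IsCompactOperator (Φ.comp T) := h _
    have hK : IsCompact (closure (⇑(Φ.comp T) '' Metric.closedBall 0 1)) :=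
      hScompact.isCompact_closure_image_closedBall (𝕜₁ := ℝ) 1
    -- extract a convergent subsequence for the composed operator
    obtain ⟨w, -, φ, hφ, hconv⟩ :=
      hK.isSeqCompact (fun n => subset_closure ⟨z n, hz n, rfl⟩)
    have hcauchyS : CauchySeq fun n => (Φ.comp T) (z (φ n)) := hconv.cauchySeq
    -- the original sequence T (z (φ n)) is Cauchy since Φ is isometric on it
    have hdist : ∀ i j : ℕ, dist (T (z i)) (T (z j)) =
        dist ((Φ.comp T) (z i)) ((Φ.comp T) (z j)) := by
      intro i j
      rw [dist_eq_norm, dist_eq_norm]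
      have : (Φ.comp T) (z i) - (Φ.comp T) (z j) = Φ (T (z i) - T (z j)) := by
        simp [map_sub]
      rw [this, hΦ]
      intro ξ hξ
      have : ⇑(T (z i) - T (z j)) = ⇑(T (z i)) - ⇑(T (z j)) := lp.coeFn_sub _ _
      rw [this] at hξ
      rcases Function.support_sub (⇑(T (z i))) (⇑(T (z j))) hξ with h1 | h1
      · exact Set.mem_iUnion.2 ⟨i, h1⟩
      · exact Set.mem_iUnion.2 ⟨j, h1⟩
    have hcauchy : CauchySeq fun n => T (z (φ n)) := by
      rw [Metric.cauchySeq_iff] at hcauchyS ⊢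
      intro ε hε
      obtain ⟨N, hN⟩ := hcauchyS ε hε
      exact ⟨N, fun m hm n hn => by rw [hdist]; exact hN m hm n hn⟩
    obtain ⟨L, hL⟩ := cauchySeq_tendsto_of_complete hcauchy
    refine ⟨L, ?_, φ, hφ, ?_⟩
    · exact isClosed_closure.mem_of_tendsto hL
        (Filter.Eventually.of_forall fun n => subset_closure ⟨z (φ n), hz (φ n), rfl⟩)
    · -- u (φ n) → L
      rw [tendsto_iff_dist_tendsto_zero]
      have hb : ∀ n, dist (u (φ n)) L ≤ 1 / (φ n + 1) + dist (T (z (φ n))) L := by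
        intro n
        calc dist (u (φ n)) L ≤ dist (u (φ n)) (T (z (φ n))) + dist (T (z (φ n))) L :=
              dist_triangle _ _ _
        _ ≤ 1 / (φ n + 1) + dist (T (z (φ n))) L := by
              gcongr
              exact (hzd (φ n)).le
      refine squeeze_zero (fun n => dist_nonneg) hb ?_
      have h1 : Filter.Tendsto (fun n : ℕ => 1 / ((φ n : ℝ) + 1)) Filter.atTop (nhds 0) := by
        apply tendsto_one_div_add_atTop_nhds_zero_nat.comp
        exact hφ.tendsto_atTop
      have h2 : Filter.Tendsto (fun n => dist (T (z (φ n))) L) Filter.atTop (nhds 0) :=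
        tendsto_iff_dist_tendsto_zero.1 hL
      simpa using h1.add h2
  -- conclude
  refine ⟨closure (⇑T '' Metric.closedBall 0 1), key.isCompact, ?_⟩
  exact Filter.mem_of_superset (Metric.closedBall_mem_nhds 0 one_pos)
    fun y hy => subset_closure (Set.mem_image_of_mem _ hy)
end

section
/- Let Z be an infinite-dimensional Banach space such that every bounded linear map from Z into ℓ¹ is compact, let Ξ be a normalized Hamel basis for Z, and let S : Z → ℓ¹(Ξ) be the linear map with S ξ = e_ξ. Then for every bounded linear map T : Z → ℓ¹(Ξ), the range of S + T is not contained in the separating space 𝔖(S). -/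
set_option maxHeartbeats 1600000 in
set_option synthInstance.maxHeartbeats 1000000 in
/-- Let Z be an infinite-dimensional Banach space such that every bounded linear map from
Z into ℓ¹ is compact, Ξ a normalized Hamel basis for Z, and S : Z → ℓ¹(Ξ) the linear map
with S ξ = e_ξ. Then for every bounded linear map T : Z → ℓ¹(Ξ), the range of S + T is
not contained in the separating space 𝔖(S). -/
theorem range_add_not_subset_separatingSpace
    {Z : Type*} [NormedAddCommGroup Z] [NormedSpace ℝ Z] [CompleteSpace Z]
    (hinf : ¬ FiniteDimensional ℝ Z)
    (hcpt : ∀ T : Z →L[ℝ] lp (fun _ : ℕ => ℝ) 1, IsCompactOperator T)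
    {Ξ : Type*} [DecidableEq Ξ] (b : Module.Basis Ξ ℝ Z) (hb : ∀ ξ : Ξ, ‖b ξ‖ = 1)
    (S : Z →ₗ[ℝ] lp (fun _ : Ξ => ℝ) 1)
    (hS : ∀ ξ : Ξ, S (b ξ) = lp.single (E := fun _ : Ξ => ℝ) 1 ξ (1 : ℝ))
    (T : Z →L[ℝ] lp (fun _ : Ξ => ℝ) 1) :
    ¬ ∀ z : Z, S z + T z ∈ separatingSpace S := by
  classical
  intro h
  open Function Filter in
  -- ### coordinates of `S`
  have hcoord : ∀ (x : Z) (ξ : Ξ), (S x : ∀ _ : Ξ, ℝ) ξ = b.repr x ξ := by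
    intro x ξ
    let ev : lp (fun _ : Ξ => ℝ) 1 →ₗ[ℝ] ℝ :=
      { toFun := fun f => f ξ
        map_add' := fun f g => by simp [lp.coeFn_add]
        map_smul' := fun c f => by simp [lp.coeFn_smul] }
    have hev : ev.comp S = b.coord ξ := by
      apply b.ext
      intro ξ'
      simp [ev, hS, lp.single_apply, Module.Basis.coord_apply, Module.Basis.repr_self, Finsupp.single_apply,
        eq_comm]
      change _ = (lp.single 1 ξ' (1:ℝ) : ∀ _ : Ξ, ℝ) ξ
      rw [lp.single_apply, Pi.single_apply]
    exact DFunLike.congr_fun hev x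
  -- ### `S` is norm-increasing
  have normS : ∀ x : Z, ‖x‖ ≤ ‖S x‖ := by
    intro x
    have hx : x = ∑ ξ ∈ (b.repr x).support, b.repr x ξ • b ξ := by
      conv_lhs => rw [← b.linearCombination_repr x]
      rw [Finsupp.linearCombination_apply, Finsupp.sum]
    have h1 : ‖x‖ ≤ ∑ ξ ∈ (b.repr x).support, ‖(S x : ∀ _ : Ξ, ℝ) ξ‖ := by
      have h2 := norm_sum_le ((b.repr x).support) (fun ξ => b.repr x ξ • b ξ)
      rw [← hx] at h2
      refine h2.trans_eq (Finset.sum_congr rfl fun ξ _ => ?_)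
      rw [norm_smul, hb, mul_one, hcoord]
    have h2 : HasSum (fun ξ => ‖(S x : ∀ _ : Ξ, ℝ) ξ‖) ‖S x‖ := by
      simpa using lp.hasSum_norm (E := fun _ : Ξ => ℝ) (p := 1) (by norm_num) (S x)
    exact h1.trans (sum_le_hasSum _ (fun ξ _ => norm_nonneg _) h2)
  -- ### key step: `T` is norm-increasing
  have key : ∀ z : Z, ‖z‖ ≤ ‖T z‖ := by
    intro z
    set F := (b.repr z).support with hF
    set f : lp (fun _ : Ξ => ℝ) 1 := S z + T z with hf
    obtain ⟨x, hx0, hxf⟩ := h z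
    have hcoordlim : ∀ ξ : Ξ, Tendsto (fun n => (S (x n) : ∀ _ : Ξ, ℝ) ξ) atTop
        (nhds ((f : ∀ _ : Ξ, ℝ) ξ)) := by
      intro ξ
      rw [tendsto_iff_norm_sub_tendsto_zero]
      have hb0 : Tendsto (fun n => ‖S (x n) - f‖) atTop (nhds 0) :=
        tendsto_iff_norm_sub_tendsto_zero.1 hxf
      refine squeeze_zero_norm (fun n => ?_) hb0
      have := lp.norm_apply_le_norm (E := fun _ : Ξ => ℝ) (p := 1) one_ne_zero
        (S (x n) - f) ξ
      simpa [lp.coeFn_sub] using this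
    set y : Z := ∑ ξ ∈ F, (f : ∀ _ : Ξ, ℝ) ξ • b ξ with hy
    set g : ℕ → Z := fun n => ∑ ξ ∈ F, (S (x n) : ∀ _ : Ξ, ℝ) ξ • b ξ with hg
    have hgy : Tendsto g atTop (nhds y) := by
      refine tendsto_finset_sum _ fun ξ _ => ?_
      exact (hcoordlim ξ).smul_const (b ξ)
    have hrlim : Tendsto (fun n => x n - g n) atTop (nhds (-y)) := by
      simpa using hx0.sub hgy
    set P : lp (fun _ : Ξ => ℝ) 1 := ∑ ξ ∈ F, (f : ∀ _ : Ξ, ℝ) ξ • lp.single 1 ξ (1 : ℝ)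
      with hP
    have hSg : ∀ n, S (g n) = ∑ ξ ∈ F, (S (x n) : ∀ _ : Ξ, ℝ) ξ • lp.single 1 ξ (1 : ℝ) := by
      intro n
      rw [hg, map_sum]
      exact Finset.sum_congr rfl fun ξ _ => by rw [map_smul, hS]
    have hSrlim : Tendsto (fun n => S (x n) - S (g n)) atTop (nhds (f - P)) := by
      refine hxf.sub ?_
      simp only [hSg]
      exact tendsto_finset_sum _ fun ξ _ => (hcoordlim ξ).smul_const _
    have hyP : ‖y‖ ≤ ‖f - P‖ := by
      have h1 : Tendsto (fun n => ‖x n - g n‖) atTop (nhds ‖y‖) := by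
        simpa using hrlim.norm
      have h2 : Tendsto (fun n => ‖S (x n) - S (g n)‖) atTop (nhds ‖f - P‖) := hSrlim.norm
      refine le_of_tendsto_of_tendsto' h1 h2 fun n => ?_
      have := normS (x n - g n)
      rwa [map_sub] at this
    -- computation of the norms
    have hzrep : z = ∑ ξ ∈ F, b.repr z ξ • b ξ := by
      conv_lhs => rw [← b.linearCombination_repr z]
      rw [Finsupp.linearCombination_apply, Finsupp.sum, hF]
    have hfc : ∀ ξ : Ξ, (f : ∀ _ : Ξ, ℝ) ξ = b.repr z ξ + (T z : ∀ _ : Ξ, ℝ) ξ := by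
      intro ξ
      rw [hf, lp.coeFn_add, Pi.add_apply, hcoord]
    have hPc : ∀ ξ : Ξ, (P : ∀ _ : Ξ, ℝ) ξ = if ξ ∈ F then (f : ∀ _ : Ξ, ℝ) ξ else 0 := by
      intro ξ
      rw [hP, lp.coeFn_sum, Finset.sum_apply]
      have h1 : ∀ ξ' ∈ F, ((f : ∀ _ : Ξ, ℝ) ξ' • lp.single 1 ξ' (1 : ℝ) :
          lp (fun _ : Ξ => ℝ) 1) ξ = if ξ = ξ' then (f : ∀ _ : Ξ, ℝ) ξ' else 0 := by
        intro ξ' _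
        rw [lp.coeFn_smul, Pi.smul_apply, lp.single_apply]
        by_cases hh : ξ = ξ' <;> simp [hh]
      rw [Finset.sum_congr rfl h1]
      simp [Finset.sum_ite_eq]
    have hfP : ∀ ξ : Ξ, ((f - P : lp (fun _ : Ξ => ℝ) 1) : ∀ _ : Ξ, ℝ) ξ
        = if ξ ∈ F then 0 else (T z : ∀ _ : Ξ, ℝ) ξ := by
      intro ξ
      rw [lp.coeFn_sub, Pi.sub_apply, hPc, hfc]
      by_cases hh : ξ ∈ F
      · simp [hh, hfc]
      · have : b.repr z ξ = 0 := by
          rw [hF] at hh; exact Finsupp.notMem_support_iff.1 hh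
        simp [hh, this]
    have hW : HasSum (fun ξ => ‖(T z : ∀ _ : Ξ, ℝ) ξ‖) ‖T z‖ := by
      simpa using lp.hasSum_norm (E := fun _ : Ξ => ℝ) (p := 1) (by norm_num) (T z)
    have hfPsum : HasSum (fun ξ => ‖((f - P : lp (fun _ : Ξ => ℝ) 1) : ∀ _ : Ξ, ℝ) ξ‖)
        ‖f - P‖ := by
      simpa using lp.hasSum_norm (E := fun _ : Ξ => ℝ) (p := 1) (by norm_num) (f - P)
    have hind : HasSum (fun ξ => if ξ ∈ F then ‖(T z : ∀ _ : Ξ, ℝ) ξ‖ else 0)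
        (∑ ξ ∈ F, ‖(T z : ∀ _ : Ξ, ℝ) ξ‖) := by
      have h1 : ∀ ξ ∉ F, (if ξ ∈ F then ‖(T z : ∀ _ : Ξ, ℝ) ξ‖ else 0) = 0 := by
        intro ξ hξ; simp [hξ]
      have h2 := hasSum_sum_of_ne_finset_zero (L := SummationFilter.unconditional Ξ) h1
      have heq : (∑ ξ ∈ F, if ξ ∈ F then ‖(T z : ∀ _ : Ξ, ℝ) ξ‖ else 0)
          = ∑ ξ ∈ F, ‖(T z : ∀ _ : Ξ, ℝ) ξ‖ :=
        Finset.sum_congr rfl fun ξ hξ => by simp [hξ]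
      rwa [heq] at h2
    have hsplit : ‖T z‖ = ‖f - P‖ + ∑ ξ ∈ F, ‖(T z : ∀ _ : Ξ, ℝ) ξ‖ := by
      refine hW.unique ?_
      have hadd := hfPsum.add hind
      have heq : (fun ξ => ‖((f - P : lp (fun _ : Ξ => ℝ) 1) : ∀ _ : Ξ, ℝ) ξ‖
          + if ξ ∈ F then ‖(T z : ∀ _ : Ξ, ℝ) ξ‖ else 0) = fun ξ => ‖(T z : ∀ _ : Ξ, ℝ) ξ‖ := by
        funext ξ
        by_cases hξ : ξ ∈ F <;> simp [hfP, hξ]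
      rwa [heq] at hadd
    have hyz : y = z + ∑ ξ ∈ F, (T z : ∀ _ : Ξ, ℝ) ξ • b ξ := by
      rw [hy]
      have h1 : ∀ ξ ∈ F, (f : ∀ _ : Ξ, ℝ) ξ • b ξ
          = b.repr z ξ • b ξ + (T z : ∀ _ : Ξ, ℝ) ξ • b ξ := by
        intro ξ _
        rw [hfc, add_smul]
      rw [Finset.sum_congr rfl h1, Finset.sum_add_distrib, ← hzrep]
    have hzy : ‖z‖ ≤ ‖y‖ + ∑ ξ ∈ F, ‖(T z : ∀ _ : Ξ, ℝ) ξ‖ := by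
      have h1 : ‖z‖ ≤ ‖y‖ + ‖∑ ξ ∈ F, (T z : ∀ _ : Ξ, ℝ) ξ • b ξ‖ := by
        have h2 : z = y - ∑ ξ ∈ F, (T z : ∀ _ : Ξ, ℝ) ξ • b ξ := by
          rw [hyz]; abel
        conv_lhs => rw [h2]
        exact norm_sub_le _ _
      refine h1.trans (add_le_add_right ?_ _)
      refine (norm_sum_le F (fun ξ => (T z : ∀ _ : Ξ, ℝ) ξ • b ξ)).trans_eq
        (Finset.sum_congr rfl fun ξ _ => ?_)
      rw [norm_smul, hb, mul_one]
    linarith [hyP]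
  -- ### `Ξ` is infinite
  haveI : Infinite Ξ := by
    by_contra hfin
    rw [not_infinite_iff_finite] at hfin
    haveI := Fintype.ofFinite Ξ
    exact hinf (Module.Finite.of_basis b)
  -- ### contradiction with compactness
  obtain ⟨R, u, hR, huR, husep⟩ := exists_seq_norm_le_one_le_norm_sub (𝕜 := ℝ) hinf
  have hsupp : ∀ n : ℕ, (Function.support fun ξ => (T (u n) : ∀ _ : Ξ, ℝ) ξ).Countable := by
    intro n
    have hsummable : Summable fun ξ => (T (u n) : ∀ _ : Ξ, ℝ) ξ := by
      have h1 := (lp.memℓp (T (u n))).summable (p := 1) (by norm_num)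
      simp only [ENNReal.toReal_one, Real.rpow_one] at h1
      exact h1.of_norm
    exact hsummable.countable_support
  set A : Set Ξ := (⋃ n, Function.support fun ξ => (T (u n) : ∀ _ : Ξ, ℝ) ξ)
    ∪ Set.range (Infinite.natEmbedding Ξ) with hA
  have hAc : A.Countable :=
    ((Set.countable_iUnion hsupp).union (Set.countable_range _))
  have hAinf : A.Infinite :=
    Set.Infinite.mono Set.subset_union_right
      (Set.infinite_range_of_injective (Infinite.natEmbedding Ξ).injective)
  haveI := hAc.to_subtype
  haveI := hAinf.to_subtype
  obtain ⟨d⟩ := nonempty_denumerable ↥A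
  set φ : ℕ → Ξ := fun n => ((@Denumerable.eqv ↥A d).symm n : Ξ) with hφ
  have hφinj : Injective φ :=
    Subtype.val_injective.comp (@Denumerable.eqv ↥A d).symm.injective
  have hφrange : Set.range φ = A := by
    rw [hφ]
    have h1 : Set.range (fun n => ((@Denumerable.eqv ↥A d).symm n : Ξ))
        = Subtype.val '' Set.range (@Denumerable.eqv ↥A d).symm := by
      rw [← Set.range_comp]; rfl
    rw [h1, Set.range_eq_univ.2 (@Denumerable.eqv ↥A d).symm.surjective]
    simp
  -- the transfer operator ρ
  have hmem : ∀ g : lp (fun _ : Ξ => ℝ) 1, Memℓp (fun n => (g : ∀ _ : Ξ, ℝ) (φ n)) 1 := by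
    intro g
    apply memℓp_gen
    have hg : Summable fun ξ => ‖(g : ∀ _ : Ξ, ℝ) ξ‖ := by
      have h1 := (lp.memℓp g).summable (p := 1) (by norm_num)
      simpa using h1
    simpa [Function.comp_def] using hg.comp_injective hφinj
  set L : lp (fun _ : Ξ => ℝ) 1 →ₗ[ℝ] lp (fun _ : ℕ => ℝ) 1 :=
    { toFun := fun g => ⟨fun n => (g : ∀ _ : Ξ, ℝ) (φ n), hmem g⟩
      map_add' := fun g₁ g₂ => Subtype.ext (funext fun n =>
        congrFun (lp.coeFn_add g₁ g₂) (φ n))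
      map_smul' := fun c g => Subtype.ext (funext fun n =>
        congrFun (lp.coeFn_smul c g) (φ n)) } with hL
  have hLapp : ∀ (g : lp (fun _ : Ξ => ℝ) 1) (n : ℕ),
      (L g : ∀ _ : ℕ, ℝ) n = (g : ∀ _ : Ξ, ℝ) (φ n) := fun g n => rfl
  have hLsum : ∀ g : lp (fun _ : Ξ => ℝ) 1,
      HasSum (fun n => ‖(g : ∀ _ : Ξ, ℝ) (φ n)‖) ‖L g‖ := by
    intro g
    have h1 := lp.hasSum_norm (E := fun _ : ℕ => ℝ) (p := 1) (by norm_num) (L g)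
    simpa [hLapp] using h1
  have hgsum : ∀ g : lp (fun _ : Ξ => ℝ) 1,
      HasSum (fun ξ => ‖(g : ∀ _ : Ξ, ℝ) ξ‖) ‖g‖ := by
    intro g
    simpa using lp.hasSum_norm (E := fun _ : Ξ => ℝ) (p := 1) (by norm_num) g
  have hLbound : ∀ g : lp (fun _ : Ξ => ℝ) 1, ‖L g‖ ≤ 1 * ‖g‖ := by
    intro g
    rw [one_mul, ← (hLsum g).tsum_eq, ← (hgsum g).tsum_eq]
    exact (hLsum g).summable.tsum_le_tsum_of_inj φ hφinj (fun c _ => norm_nonneg _) (fun n => le_rfl)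
      (hgsum g).summable
  set ρ : lp (fun _ : Ξ => ℝ) 1 →L[ℝ] lp (fun _ : ℕ => ℝ) 1 :=
    L.mkContinuous 1 hLbound with hρ
  have hρapp : ∀ g, ρ g = L g := fun g => rfl
  have hnormeq : ∀ g : lp (fun _ : Ξ => ℝ) 1,
      (∀ ξ, ξ ∉ A → (g : ∀ _ : Ξ, ℝ) ξ = 0) → ‖ρ g‖ = ‖g‖ := by
    intro g hg0
    have h0 : ∀ ξ ∉ Set.range φ, ‖(g : ∀ _ : Ξ, ℝ) ξ‖ = 0 := by
      intro ξ hξ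
      rw [hφrange] at hξ
      rw [hg0 ξ hξ, norm_zero]
    have h1 : HasSum ((fun ξ => ‖(g : ∀ _ : Ξ, ℝ) ξ‖) ∘ φ) ‖g‖ :=
      (hφinj.hasSum_iff h0).2 (hgsum g)
    rw [hρapp]
    exact ((hLsum g).unique h1)
  set K : Z →L[ℝ] lp (fun _ : ℕ => ℝ) 1 := ρ.comp T with hK
  obtain ⟨Kset, hKsetc, himg⟩ :=
    (hcpt K).image_closedBall_subset_compact (f := (K : Z →ₗ[ℝ] lp (fun _ : ℕ => ℝ) 1)) R
  have hmemK : ∀ n : ℕ, K (u n) ∈ Kset := by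
    intro n
    apply himg
    exact ⟨u n, by simpa [Metric.mem_closedBall, dist_zero_right] using huR n, rfl⟩
  obtain ⟨xx, -, ψ, hψmono, hψlim⟩ := hKsetc.tendsto_subseq hmemK
  have hcauchy : CauchySeq (fun m => K (u (ψ m))) := hψlim.cauchySeq
  obtain ⟨N, hN⟩ := Metric.cauchySeq_iff'.1 hcauchy 1 one_pos
  have hlt : dist (K (u (ψ (N + 1)))) (K (u (ψ N))) < 1 := hN (N + 1) (Nat.le_succ N)
  set a := ψ (N + 1) with ha
  set c := ψ N with hc
  have hne : a ≠ c := fun hh => (Nat.succ_ne_self N) (hψmono.injective hh)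
  have h1 : 1 ≤ ‖u a - u c‖ := husep hne
  have h2 : ‖u a - u c‖ ≤ ‖T (u a) - T (u c)‖ := by
    have h3 := key (u a - u c)
    rwa [map_sub] at h3
  have hsupport : ∀ ξ, ξ ∉ A →
      ((T (u a) - T (u c) : lp (fun _ : Ξ => ℝ) 1) : ∀ _ : Ξ, ℝ) ξ = 0 := by
    intro ξ hξ
    rw [hA, Set.mem_union, Set.mem_iUnion] at hξ
    push_neg at hξ
    have ha0 : (T (u a) : ∀ _ : Ξ, ℝ) ξ = 0 := by
      have h3 := hξ.1 (ψ (N + 1))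
      simpa [Function.mem_support, not_not] using h3
    have hc0 : (T (u c) : ∀ _ : Ξ, ℝ) ξ = 0 := by
      have h3 := hξ.1 (ψ N)
      simpa [Function.mem_support, not_not] using h3
    rw [lp.coeFn_sub, Pi.sub_apply, ha0, hc0, sub_zero]
  have h3 : ‖T (u a) - T (u c)‖ = ‖ρ (T (u a) - T (u c))‖ :=
    (hnormeq _ hsupport).symm
  have h4 : ρ (T (u a) - T (u c)) = K (u a) - K (u c) := by
    rw [map_sub]
    rfl
  have h5 : dist (K (u a)) (K (u c)) = ‖T (u a) - T (u c)‖ := by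
    rw [dist_eq_norm, ← h4, ← h3]
  linarith
end

section
/- Let A be an infinite-dimensional Banach algebra with trivial product, and Y a closed subspace of a Banach space X such that there is a bounded linear injection from X/Y into ℓ∞(ℕ, Y). Then there exists a continuous left A-module action on X (compatible with the trivial algebra structure, i.e. a·(b·x) = 0 for all a,b) such that, together with the trivial right action, ann_A X = Y. -/
open Submodule

/-- Evaluation at a coordinate on `ℓ∞`. -/
noncomputable def lpInftyEval {ι : Type*} (G : ι → Type*) [∀ i, NormedAddCommGroup (G i)]
    [∀ i, NormedSpace ℝ (G i)] (n : ι) : lp G ⊤ →L[ℝ] G n :=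
  LinearMap.mkContinuous
    { toFun := fun v => v n
      map_add' := fun v w => congrFun (lp.coeFn_add v w) n
      map_smul' := fun c v => congrFun (lp.coeFn_smul c v) n }
    1 (fun v => by simpa [one_mul] using lp.norm_apply_le_norm ENNReal.top_ne_zero v n)

@[simp] lemma lpInftyEval_apply {ι : Type*} (G : ι → Type*) [∀ i, NormedAddCommGroup (G i)]
    [∀ i, NormedSpace ℝ (G i)] (n : ι) (v : lp G ⊤) : lpInftyEval G n v = v n := rfl

/-- The quotient map as a continuous linear map. -/
noncomputable def mkQL {X : Type*} [NormedAddCommGroup X] [NormedSpace ℝ X]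
    (Y : Submodule ℝ X) : X →L[ℝ] X ⧸ Y :=
  LinearMap.mkContinuous Y.mkQ 1
    (fun x => by simpa [one_mul] using Submodule.Quotient.norm_mk_le Y x)

@[simp] lemma mkQL_apply {X : Type*} [NormedAddCommGroup X] [NormedSpace ℝ X]
    (Y : Submodule ℝ X) (x : X) : _root_.mkQL Y x = Submodule.Quotient.mk x := rfl

lemma biorth_step {A : Type*} [NonUnitalNormedRing A] [NormedSpace ℝ A] [CompleteSpace A]
    (hinf : ¬ FiniteDimensional ℝ A) (s : Finset (A × (A →L[ℝ] ℝ))) :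
    ∃ q : A × (A →L[ℝ] ℝ), q.2 q.1 = 1 ∧ ∀ p ∈ s, p.2 q.1 = 0 ∧ q.2 p.1 = 0 := by
  classical
  set Φ : A →ₗ[ℝ] (s → ℝ) :=
    LinearMap.pi (fun p : s => ((p : A × (A →L[ℝ] ℝ)).2 : A →ₗ[ℝ] ℝ)) with hΦ
  set K : Submodule ℝ A := LinearMap.ker Φ with hK
  set V : Submodule ℝ A := Submodule.span ℝ (Prod.fst '' (s : Set (A × (A →L[ℝ] ℝ)))) with hV
  haveI : FiniteDimensional ℝ V :=
    Module.Finite.span_of_finite ℝ (s.finite_toSet.image _)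
  obtain ⟨b, hbK, hbV⟩ : ∃ b, b ∈ K ∧ b ∉ V := by
    by_contra h
    push_neg at h
    have hKV : K ≤ V := fun x hx => h x hx
    haveI : FiniteDimensional ℝ K := Submodule.finiteDimensional_of_le hKV
    haveI : FiniteDimensional ℝ (A ⧸ K) :=
      FiniteDimensional.of_injective (Φ.quotKerEquivRange).toLinearMap
        (Φ.quotKerEquivRange).injective
    apply hinf
    refine Module.rank_lt_aleph0_iff.mp ?_
    rw [← Submodule.rank_quotient_add_rank K]
    exact Cardinal.add_lt_aleph0 (Module.rank_lt_aleph0_iff.mpr inferInstance)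
      (Module.rank_lt_aleph0_iff.mpr inferInstance)
  haveI : IsClosed (V : Set A) := V.closed_of_finiteDimensional
  have hbq : _root_.mkQL V b ≠ 0 := by
    simpa [_root_.mkQL_apply, Submodule.Quotient.mk_eq_zero] using hbV
  obtain ⟨g₀, -, hg₀⟩ := exists_dual_vector ℝ (_root_.mkQL V b) (norm_ne_zero_iff.mpr hbq)
  refine ⟨(b, (‖_root_.mkQL V b‖⁻¹ • g₀).comp (_root_.mkQL V)), ?_, ?_⟩
  · have : ‖_root_.mkQL V b‖ ≠ 0 := by simpa [norm_eq_zero] using hbq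
    simp only [ContinuousLinearMap.comp_apply, ContinuousLinearMap.smul_apply, hg₀]
    field_simp
    simp only [smul_eq_mul, RCLike.ofReal_real_eq_id, id, one_div]
    exact inv_mul_cancel₀ this
  · intro p hp
    constructor
    · have : Φ b = 0 := hbK
      have := congrFun this ⟨p, hp⟩
      simpa [hΦ] using this
    · have hp1 : p.1 ∈ V := Submodule.subset_span ⟨p, hp, rfl⟩
      have : _root_.mkQL V p.1 = 0 := by
        simpa [_root_.mkQL_apply, Submodule.Quotient.mk_eq_zero] using hp1
      simp [ContinuousLinearMap.comp_apply, this]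

set_option maxHeartbeats 1000000

/-- Let A be an infinite-dimensional Banach algebra with trivial product, Y a closed
subspace of a Banach space X admitting a bounded linear injection of X/Y into ℓ∞(ℕ, Y).
Then there is a continuous left A-module action on X (compatible with the trivial product,
i.e. a·(b·x) = 0) such that, with the trivial right action, ann_A X = Y. -/
theorem exists_module_action_with_annihilator
    {A : Type*} [NonUnitalNormedRing A] [NormedSpace ℝ A] [CompleteSpace A]
    (htriv : ∀ a b : A, a * b = 0) (hinf : ¬ FiniteDimensional ℝ A)
    {X : Type*} [NormedAddCommGroup X] [NormedSpace ℝ X] [CompleteSpace X]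
    (Y : Submodule ℝ X) (hY : IsClosed (Y : Set X))
    (J : (X ⧸ Y) →L[ℝ] lp (fun _ : ℕ => Y) ⊤) (hJ : Function.Injective J) :
    ∃ L : A →L[ℝ] X →L[ℝ] X,
      (∀ (a b : A) (x : X), L a (L b x) = 0) ∧
      {x : X | ∀ a : A, L a x = 0} = (Y : Set X) := by
  classical
  obtain ⟨c, hP, hr⟩ := exists_seq_of_forall_finset_exists
    (fun p : A × (A →L[ℝ] ℝ) => p.2 p.1 = 1)
    (fun p q => p.2 q.1 = 0 ∧ q.2 p.1 = 0) (fun s _ => biorth_step hinf s)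
  set a : ℕ → A := fun n => (c n).1 with ha
  set f : ℕ → A →L[ℝ] ℝ := fun n => (c n).2 with hf
  have hfa : ∀ n m, n ≠ m → f n (a m) = 0 := by
    intro n m hnm
    rcases lt_or_gt_of_ne hnm with h | h
    · exact (hr n m h).1
    · exact (hr m n h).2
  have hfa1 : ∀ n, f n (a n) = 1 := fun n => hP n
  -- the operators
  set W : ℕ → X →L[ℝ] X := fun n =>
    Y.subtypeL.comp ((lpInftyEval (fun _ : ℕ => Y) n).comp (J.comp (_root_.mkQL Y))) with hW
  have hWmem : ∀ n x, W n x ∈ Y := fun n x => (lpInftyEval (fun _ : ℕ => Y) n (J (_root_.mkQL Y x))).2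
  have hWY : ∀ n (y : X), y ∈ Y → W n y = 0 := by
    intro n y hy
    have h0 : _root_.mkQL Y y = 0 := by
      simpa [_root_.mkQL_apply, Submodule.Quotient.mk_eq_zero] using hy
    simp [hW, h0]
  set ε : ℕ → ℝ := fun n => ((2 : ℝ) ^ n * ((‖f n‖ + 1) * (‖W n‖ + 1)))⁻¹ with hε
  have hεpos : ∀ n, 0 < ε n := by
    intro n
    have h1 : (0:ℝ) < ‖f n‖ + 1 := by positivity
    have h2 : (0:ℝ) < ‖W n‖ + 1 := by positivity
    positivity
  have hεbound : ∀ n, ε n * (‖f n‖ * ‖W n‖) ≤ (1 / 2 : ℝ) ^ n := by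
    intro n
    have h1 : (0:ℝ) < ‖f n‖ + 1 := by positivity
    have h2 : (0:ℝ) < ‖W n‖ + 1 := by positivity
    have hle : ‖f n‖ * ‖W n‖ ≤ (‖f n‖ + 1) * (‖W n‖ + 1) := by
      nlinarith [norm_nonneg (f n), norm_nonneg (W n)]
    have hD : ((‖f n‖ + 1) * (‖W n‖ + 1)) ≠ 0 := by positivity
    have heq : ε n * ((‖f n‖ + 1) * (‖W n‖ + 1)) = ((2:ℝ) ^ n)⁻¹ := by
      show ((2 : ℝ) ^ n * ((‖f n‖ + 1) * (‖W n‖ + 1)))⁻¹ * ((‖f n‖ + 1) * (‖W n‖ + 1)) = _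
      rw [mul_inv, mul_assoc, inv_mul_cancel₀ hD, mul_one]
    calc ε n * (‖f n‖ * ‖W n‖) ≤ ε n * ((‖f n‖ + 1) * (‖W n‖ + 1)) :=
          mul_le_mul_of_nonneg_left hle (hεpos n).le
      _ = ((2:ℝ) ^ n)⁻¹ := heq
      _ = (1 / 2 : ℝ) ^ n := by rw [one_div, inv_pow]
  have htermbound : ∀ (b : A) (x : X) (n : ℕ),
      ‖ε n • (f n b • W n x)‖ ≤ (1 / 2 : ℝ) ^ n * (‖b‖ * ‖x‖) := by
    intro b x n
    have h1 := (f n).le_opNorm b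
    have h2 := (W n).le_opNorm x
    rw [norm_smul, norm_smul, Real.norm_eq_abs (ε n), abs_of_pos (hεpos n)]
    have h3 : ‖f n b‖ * ‖W n x‖ ≤ (‖f n‖ * ‖b‖) * (‖W n‖ * ‖x‖) :=
      mul_le_mul h1 h2 (norm_nonneg _) (by positivity)
    calc ε n * (‖f n b‖ * ‖W n x‖) ≤ ε n * ((‖f n‖ * ‖b‖) * (‖W n‖ * ‖x‖)) :=
          mul_le_mul_of_nonneg_left h3 (hεpos n).le
      _ = (ε n * (‖f n‖ * ‖W n‖)) * (‖b‖ * ‖x‖) := by ring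
      _ ≤ (1 / 2 : ℝ) ^ n * (‖b‖ * ‖x‖) :=
          mul_le_mul_of_nonneg_right (hεbound n) (by positivity)
  have hsum : ∀ (b : A) (x : X), Summable (fun n => ε n • (f n b • W n x)) := by
    intro b x
    exact Summable.of_norm_bounded (summable_geometric_two.mul_right (‖b‖ * ‖x‖))
      (htermbound b x)
  set u : A → X → X := fun b x => ∑' n, ε n • (f n b • W n x) with hu
  have huadd1 : ∀ (b b' : A) (x : X), u (b + b') x = u b x + u b' x := by
    intro b b' x
    have h : (fun n => ε n • (f n (b + b') • W n x))
        = fun n => ε n • (f n b • W n x) + ε n • (f n b' • W n x) := by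
      funext n
      rw [map_add, add_smul, smul_add]
    rw [hu]
    simp only [h]
    exact Summable.tsum_add (hsum b x) (hsum b' x)
  have husmul1 : ∀ (r : ℝ) (b : A) (x : X), u (r • b) x = r • u b x := by
    intro r b x
    have h : (fun n => ε n • (f n (r • b) • W n x))
        = fun n => r • (ε n • (f n b • W n x)) := by
      funext n
      rw [map_smul, smul_eq_mul, mul_smul]
      rw [smul_comm r (ε n)]
    rw [hu]
    simp only [h]
    exact ((hsum b x).hasSum.const_smul r).tsum_eq
  have huadd2 : ∀ (b : A) (x x' : X), u b (x + x') = u b x + u b x' := by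
    intro b x x'
    have h : (fun n => ε n • (f n b • W n (x + x')))
        = fun n => ε n • (f n b • W n x) + ε n • (f n b • W n x') := by
      funext n
      rw [map_add, smul_add, smul_add]
    rw [hu]
    simp only [h]
    exact Summable.tsum_add (hsum b x) (hsum b x')
  have husmul2 : ∀ (r : ℝ) (b : A) (x : X), u b (r • x) = r • u b x := by
    intro r b x
    have h : (fun n => ε n • (f n b • W n (r • x)))
        = fun n => r • (ε n • (f n b • W n x)) := by
      funext n
      rw [map_smul, smul_comm (f n b) r, smul_comm r (ε n)]
    rw [hu]
    simp only [h]
    exact ((hsum b x).hasSum.const_smul r).tsum_eq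
  have hbound : ∀ (b : A) (x : X), ‖u b x‖ ≤ 2 * ‖b‖ * ‖x‖ := by
    intro b x
    have hns : Summable (fun n => ‖ε n • (f n b • W n x)‖) :=
      Summable.of_nonneg_of_le (fun n => norm_nonneg _) (htermbound b x)
        (summable_geometric_two.mul_right (‖b‖ * ‖x‖))
    calc ‖u b x‖ ≤ ∑' n, ‖ε n • (f n b • W n x)‖ := norm_tsum_le_tsum_norm hns
      _ ≤ ∑' n : ℕ, (1 / 2 : ℝ) ^ n * (‖b‖ * ‖x‖) :=
          Summable.tsum_le_tsum (htermbound b x) hns (summable_geometric_two.mul_right (‖b‖ * ‖x‖))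
      _ = (∑' n : ℕ, (1 / 2 : ℝ) ^ n) * (‖b‖ * ‖x‖) := tsum_mul_right
      _ = 2 * ‖b‖ * ‖x‖ := by rw [tsum_geometric_two]; ring
  set L : A →L[ℝ] X →L[ℝ] X :=
    LinearMap.mkContinuous₂ (LinearMap.mk₂ ℝ u huadd1 husmul1 huadd2 husmul2) 2
      (fun b x => hbound b x) with hL
  have hLapp : ∀ (b : A) (x : X), L b x = u b x := fun b x => rfl
  have hterm : ∀ (b : A) (x : X), HasSum (fun n => ε n • (f n b • W n x)) (L b x) := by
    intro b x
    rw [hLapp, hu]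
    exact (hsum b x).hasSum
  have hzeroY : ∀ (b : A) (y : X), y ∈ Y → L b y = 0 := by
    intro b y hy
    have h := hterm b y
    have h2 : (fun n => ε n • (f n b • W n y)) = fun _ => (0 : X) := by
      funext n; rw [hWY n y hy]; simp
    rw [h2] at h
    exact h.unique hasSum_zero
  have hmemY : ∀ (b : A) (x : X), L b x ∈ Y := by
    intro b x
    have h := hterm b x
    refine hY.mem_of_tendsto h.tendsto_sum_nat (Filter.Eventually.of_forall fun m => ?_)
    exact Submodule.sum_mem Y fun n _ => Submodule.smul_mem Y _ (Submodule.smul_mem Y _ (hWmem n x))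
  refine ⟨L, fun p q x => hzeroY p _ (hmemY q x), ?_⟩
  ext x
  simp only [Set.mem_setOf_eq, SetLike.mem_coe]
  constructor
  · intro hx
    have hWzero : ∀ m, W m x = 0 := by
      intro m
      have h := hterm (a m) x
      rw [hx (a m)] at h
      have hsingle : HasSum (fun n => ε n • (f n (a m) • W n x)) (ε m • (f m (a m) • W m x)) := by
        refine hasSum_single (f := fun n => ε n • (f n (a m) • W n x)) m ?_
        intro n hn
        show ε n • (f n (a m) • W n x) = 0
        rw [hfa n m hn]
        simp
      have h0 : ε m • (f m (a m) • W m x) = 0 := hsingle.unique h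
      rw [hfa1 m, one_smul] at h0
      exact (smul_eq_zero.mp h0).resolve_left (ne_of_gt (hεpos m))
    have hJ0 : J (_root_.mkQL Y x) = 0 := by
      apply lp.ext
      funext n
      have h1 : (lpInftyEval (fun _ : ℕ => Y) n (J (_root_.mkQL Y x)) : X) = 0 := hWzero n
      have h2 : lpInftyEval (fun _ : ℕ => Y) n (J (_root_.mkQL Y x)) = 0 :=
        Subtype.coe_injective h1
      simpa [lpInftyEval_apply] using h2
    have h3 : _root_.mkQL Y x = 0 := hJ (by simpa using hJ0)
    simpa [_root_.mkQL_apply, Submodule.Quotient.mk_eq_zero] using h3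
  · intro hx b
    exact hzeroY b x hx
end

section
/- Let A be an infinite-dimensional separable Banach algebra with trivial product, X a Banach A-bimodule with trivial right action, and Y = ann_A X. Then there exists a bounded linear injection from X/Y into ℓ∞(ℕ, Y). -/
set_option maxHeartbeats 1000000


/-- The annihilator of `A` in `X` (with trivial right action), as a submodule. -/
def annihilatorSubmodule {A X : Type*} [NonUnitalNormedRing A] [NormedSpace ℝ A]
    [NormedAddCommGroup X] [NormedSpace ℝ X] (L : A →L[ℝ] X →L[ℝ] X) :
    Submodule ℝ X where
  carrier := {x | ∀ a : A, L a x = 0}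
  zero_mem' := fun a => map_zero (L a)
  add_mem' := by
    intro x y hx hy a
    simp [map_add, hx a, hy a]
  smul_mem' := by
    intro c x hx a
    simp [map_smul, hx a]

/-- Let A be an infinite-dimensional separable Banach algebra with trivial product, X a
Banach A-bimodule with trivial right action (left action L), and Y = ann_A X. Then there
is a bounded linear injection from X/Y into ℓ∞(ℕ, Y). -/
theorem exists_injection_quotient_into_linfty
    {A : Type*} [NonUnitalNormedRing A] [NormedSpace ℝ A] [CompleteSpace A]
    [TopologicalSpace.SeparableSpace A]
    (htriv : ∀ a b : A, a * b = 0) (hinf : ¬ FiniteDimensional ℝ A)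
    {X : Type*} [NormedAddCommGroup X] [NormedSpace ℝ X] [CompleteSpace X]
    (L : A →L[ℝ] X →L[ℝ] X) (hL : ∀ (a b : A) (x : X), L (a * b) x = L a (L b x)) :
    ∃ J : (X ⧸ annihilatorSubmodule L) →L[ℝ] lp (fun _ : ℕ => annihilatorSubmodule L) ⊤,
      Function.Injective J := by
  classical
  set Y := annihilatorSubmodule L with hY
  have : Nonempty A := ⟨0⟩
  set u : ℕ → A := TopologicalSpace.denseSeq A with hu
  have hdense : DenseRange u := TopologicalSpace.denseRange_denseSeq A
  set a : ℕ → A := fun n => (1 + ‖u n‖)⁻¹ • u n with ha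
  have hpos : ∀ n, (0:ℝ) < 1 + ‖u n‖ := fun n => by positivity
  have hanorm : ∀ n, ‖a n‖ ≤ 1 := by
    intro n
    rw [ha]
    simp only [norm_smul, norm_inv, Real.norm_eq_abs, abs_of_pos (hpos n)]
    rw [inv_mul_le_iff₀ (hpos n)]
    nlinarith [norm_nonneg (u n)]
  -- each L (a n) x lies in Y
  have hmemY : ∀ (c : A) (x : X), L c x ∈ Y := by
    intro c x b
    have := hL b c x
    rw [htriv b c] at this
    simpa using this.symm
  have hbound : ∀ x : X, ∀ n : ℕ, ‖L (a n) x‖ ≤ ‖L‖ * ‖x‖ := by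
    intro x n
    calc ‖L (a n) x‖ ≤ ‖L (a n)‖ * ‖x‖ := (L (a n)).le_opNorm x
    _ ≤ (‖L‖ * ‖a n‖) * ‖x‖ := by
        gcongr
        exact L.le_opNorm (a n)
    _ ≤ (‖L‖ * 1) * ‖x‖ := by
        gcongr
        exact hanorm n
    _ = ‖L‖ * ‖x‖ := by ring
  have hmem : ∀ x : X, Memℓp (fun n : ℕ => (⟨L (a n) x, hmemY (a n) x⟩ : Y)) ⊤ := by
    intro x
    apply memℓp_infty
    refine ⟨‖L‖ * ‖x‖, ?_⟩
    rintro r ⟨n, rfl⟩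
    exact hbound x n
  set Tlin : X →ₗ[ℝ] lp (fun _ : ℕ => Y) ⊤ :=
    { toFun := fun x => ⟨fun n => ⟨L (a n) x, hmemY (a n) x⟩, hmem x⟩
      map_add' := by
        intro x y
        apply Subtype.ext
        funext n
        apply Subtype.ext
        simp only [map_add]
        rfl
      map_smul' := by
        intro c x
        apply Subtype.ext
        funext n
        apply Subtype.ext
        simp only [map_smul]
        rfl } with hTlin
  have hTnorm : ∀ x : X, ‖Tlin x‖ ≤ ‖L‖ * ‖x‖ := by
    intro x
    apply lp.norm_le_of_forall_le (by positivity)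
    intro n
    exact hbound x n
  have hker1 : Y ≤ LinearMap.ker Tlin := by
    intro x hx
    apply Subtype.ext
    funext n
    apply Subtype.ext
    simpa [hTlin] using hx (a n)
  have hker2 : LinearMap.ker Tlin ≤ Y := by
    intro x hx b
    have h0 : Tlin x = 0 := hx
    have hxn : ∀ n, L (a n) x = 0 := by
      intro n
      have := congrArg (fun f : lp (fun _ : ℕ => Y) ⊤ => ((f n : Y) : X)) h0
      simpa [hTlin] using this
    have hun : ∀ n, L (u n) x = 0 := by
      intro n
      have h1 : L (u n) x = (1 + ‖u n‖) • L (a n) x := by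
        simp only [ha, map_smul, ContinuousLinearMap.smul_apply, smul_smul,
          mul_inv_cancel₀ (ne_of_gt (hpos n)), one_smul]
      rw [h1, hxn n, smul_zero]
    -- closed set argument
    have hcont : Continuous fun c : A => L c x := ((L.flip x).continuous)
    have hclosed : IsClosed {c : A | L c x = 0} := isClosed_eq hcont continuous_const
    have hsub : Set.range u ⊆ {c : A | L c x = 0} := by
      rintro _ ⟨n, rfl⟩
      exact hun n
    have hcl := hclosed.closure_subset_iff.mpr hsub
    have hb : b ∈ closure (Set.range u) := by
      rw [hdense.closure_eq]
      trivial
    exact hcl hb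
  set J₀ : (X ⧸ Y) →ₗ[ℝ] lp (fun _ : ℕ => Y) ⊤ := Y.liftQ Tlin hker1 with hJ₀
  have hJ₀bound : ∀ q : X ⧸ Y, ‖J₀ q‖ ≤ (‖L‖ + 1) * ‖q‖ := by
    intro q
    refine le_of_forall_pos_le_add ?_
    intro ε hε
    obtain ⟨x, rfl, hxlt⟩ := Submodule.Quotient.norm_mk_lt q (show (0:ℝ) < ε / (‖L‖ + 1) by positivity)
    have h1 : J₀ (Submodule.Quotient.mk x) = Tlin x := rfl
    rw [h1]
    calc ‖Tlin x‖ ≤ ‖L‖ * ‖x‖ := hTnorm x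
    _ ≤ (‖L‖ + 1) * ‖x‖ := by nlinarith [norm_nonneg x, norm_nonneg L]
    _ ≤ (‖L‖ + 1) * (‖(Submodule.Quotient.mk x : X ⧸ Y)‖ + ε / (‖L‖ + 1)) := by
        have h2 : (0:ℝ) ≤ ‖L‖ + 1 := by positivity
        exact mul_le_mul_of_nonneg_left hxlt.le h2
    _ = (‖L‖ + 1) * ‖(Submodule.Quotient.mk x : X ⧸ Y)‖ + ε := by
        have h3 : (‖L‖ + 1) ≠ 0 := by positivity
        field_simp
  refine ⟨J₀.mkContinuous (‖L‖ + 1) hJ₀bound, ?_⟩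
  have : Function.Injective J₀ := by
    rw [← LinearMap.ker_eq_bot]
    exact Submodule.ker_liftQ_eq_bot Y Tlin hker1 hker2
  exact this
end
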